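/- arXiv:2305.00140 — 3 statements merged into one kernel-verified Lean document; each statement's English description precedes it below -/
import Mathlib

section
/- Let C = {x, y, z, t} be a set of four distinct alternatives in an election with voting profile V such that z ≥_{3/4} x, x ≥_{3/4} y, and x ≥_{3/4} t. Then, counting votes with multiplicity, #{v ∈ V : top_{{x,y,t}}(v) = y} + #{v ∈ V : top_{{y,z,t}}(v) = y} ≤ #{v ∈ V : top_{{x,y,t}}(v) = x} + #{v ∈ V : top_{{y,z,t}}(v) = z}. Equivalently, the total contribution of the two subsets {x,y,t} and {y,z,t} to the difference d³(z>x>y>t, V) − d³(y>z>x>t, V) is at most 0. -/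
open Finset

variable {α : Type}

/-- A ranking of the alternatives: a duplicate-free list containing every
alternative; earlier in the list means more preferred. -/
def IsRanking (l : List α) : Prop := l.Nodup ∧ ∀ a : α, a ∈ l

/-- The 3-wise Kendall tau distance between two rankings: the number of subsets
`S` with `|S| ≤ 3` on which the two rankings have different top elements. -/
def d3 [Fintype α] [DecidableEq α] (l m : List α) : ℕ :=
  ((Finset.univ : Finset α).powerset.filter
    (fun S => S.card ≤ 3 ∧ ∃ a ∈ S, ∃ b ∈ S, a ≠ b ∧
      (∀ c ∈ S, l.idxOf a ≤ l.idxOf c) ∧ (∀ c ∈ S, m.idxOf b ≤ m.idxOf c))).card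

/-- Total 3-wise Kendall tau distance from a ranking to a voting profile. -/
def d3V [Fintype α] [DecidableEq α] (l : List α) (V : Multiset (List α)) : ℕ :=
  (V.map (fun v => d3 l v)).sum

/-- A 3-wise median of the voting profile `V`. -/
def IsMedian3 [Fintype α] [DecidableEq α] (V : Multiset (List α)) (l : List α) : Prop :=
  IsRanking l ∧ ∀ m : List α, IsRanking m → d3V l V ≤ d3V m V

/-- The 2-wise Kendall tau distance between two rankings: the number of
two-element subsets on which the relative orders differ. -/
def d2 [Fintype α] [DecidableEq α] (l m : List α) : ℕ :=
  ((Finset.univ : Finset α).powerset.filter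
    (fun S => S.card = 2 ∧ ∃ a ∈ S, ∃ b ∈ S,
      l.idxOf a < l.idxOf b ∧ m.idxOf b < m.idxOf a)).card

/-- Total 2-wise Kendall tau distance from a ranking to a voting profile. -/
def d2V [Fintype α] [DecidableEq α] (l : List α) (V : Multiset (List α)) : ℕ :=
  (V.map (fun v => d2 l v)).sum

/-- A 2-wise median of the voting profile `V`. -/
def IsMedian2 [Fintype α] [DecidableEq α] (V : Multiset (List α)) (l : List α) : Prop :=
  IsRanking l ∧ ∀ m : List α, IsRanking m → d2V l V ≤ d2V m V

/-- `x ≥ₛ y`: `x` is ranked before `y` in at least `s·|V|` votes. -/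
def geq [DecidableEq α] (V : Multiset (List α)) (s : ℝ) (x y : α) : Prop :=
  s * (V.card : ℝ) ≤ (V.countP (fun v => v.idxOf x < v.idxOf y) : ℝ)

/-- `x` is a non-dirty alternative with respect to the threshold `s`. -/
def NonDirty [DecidableEq α] (V : Multiset (List α)) (s : ℝ) (x : α) : Prop :=
  ∀ y : α, y ≠ x → geq V s x y ∨ geq V s y x

/-- The election satisfies the `3/4`-majority rule with respect to the 3-wise
Kemeny voting scheme. -/
def Satisfies34 [Fintype α] [DecidableEq α] (V : Multiset (List α)) : Prop :=
  ∀ x : α, NonDirty V (3/4) x → ∀ y : α, y ≠ x →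
    (geq V (3/4) x y → ∀ π : List α, IsMedian3 V π → π.idxOf x < π.idxOf y) ∧
    (geq V (3/4) y x → ∀ π : List α, IsMedian3 V π → π.idxOf y < π.idxOf x)

/-- `n_{xy}`: the number of votes ranking `x` before `y`. -/
def nn2 [DecidableEq α] (V : Multiset (List α)) (x y : α) : ℕ :=
  V.countP (fun v => v.idxOf x < v.idxOf y)

/-- `n_{xyz}`: the number of votes ranking `x` before `y` before `z`. -/
def nn3 [DecidableEq α] (V : Multiset (List α)) (x y z : α) : ℕ :=
  V.countP (fun v => v.idxOf x < v.idxOf y ∧ v.idxOf y < v.idxOf z)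

/-- `n_{xyzt}`: the number of votes ranking `x` before `y` before `z` before `t`. -/
def nn4 [DecidableEq α] (V : Multiset (List α)) (x y z t : α) : ℕ :=
  V.countP (fun v => v.idxOf x < v.idxOf y ∧ v.idxOf y < v.idxOf z ∧
    v.idxOf z < v.idxOf t)

/-- `δ_{xy} = n_{xy} - n_{yx}`. -/
def del [DecidableEq α] (V : Multiset (List α)) (x y : α) : ℤ :=
  (nn2 V x y : ℤ) - nn2 V y x

/-- `P_{x,y,z}`. -/
def Pq [DecidableEq α] (V : Multiset (List α)) (x y z : α) : ℤ :=
  3 * (nn3 V x z y : ℤ) + nn3 V x y z + nn3 V z x y + nn3 V z y x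
    - 4 * nn3 V y z x - 2 * nn3 V y x z

/-- `Q_{x,y,z}`. -/
def Qq [DecidableEq α] (V : Multiset (List α)) (x y z : α) : ℤ :=
  (nn3 V x y z : ℤ) + nn3 V x z y - nn3 V y x z - nn3 V y z x

/-- `R_{y,x,z,t}`. -/
def Rr [DecidableEq α] (V : Multiset (List α)) (y x z t : α) : ℤ :=
  2 * (nn4 V y z t x : ℤ) + 2 * nn4 V y z x t + nn4 V y t z x + nn4 V y t x z

/-- `S_{y,x,z,t} = R_{y,x,z,t} - R_{x,y,z,t}`. -/
def Ss [DecidableEq α] (V : Multiset (List α)) (y x z t : α) : ℤ :=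
  Rr V y x z t - Rr V x y z t


lemma my_countP_add_eq {β : Type*} (s : Multiset β) (p q : β → Prop)
    [DecidablePred p] [DecidablePred q] :
    s.countP p + s.countP q
      = s.countP (fun a => p a ∨ q a) + s.countP (fun a => p a ∧ q a) := by
  induction s using Multiset.induction_on with
  | empty => simp
  | cons a s ih =>
    simp only [Multiset.countP_cons]
    by_cases hp : p a <;> by_cases hq : q a <;> simp [hp, hq] <;> omega

lemma my_countP_mono {β : Type*} (s : Multiset β) (p q : β → Prop)
    [DecidablePred p] [DecidablePred q] (h : ∀ a ∈ s, p a → q a) :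
    s.countP p ≤ s.countP q := by
  revert h
  induction s using Multiset.induction_on with
  | empty => simp
  | cons a s ih =>
    intro h
    simp only [Multiset.countP_cons]
    have h2 := ih (fun b hb => h b (Multiset.mem_cons_of_mem hb))
    by_cases hp : p a
    · have hq := h a (Multiset.mem_cons_self a s) hp
      simp [hp, hq]; omega
    · simp [hp]; omega

lemma my_countP_trans {β : Type*} (s : Multiset β) (p q r : β → Prop)
    [DecidablePred p] [DecidablePred q] [DecidablePred r]
    (h : ∀ a ∈ s, p a ∧ q a → r a) :
    s.countP p + s.countP q ≤ s.card + s.countP r := by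
  calc s.countP p + s.countP q
      = s.countP (fun a => p a ∨ q a) + s.countP (fun a => p a ∧ q a) :=
        my_countP_add_eq s p q
    _ ≤ s.card + s.countP r := by
        have h1 := Multiset.countP_le_card (fun a => p a ∨ q a) s
        have h2 := my_countP_mono s (fun a => p a ∧ q a) r h
        omega

lemma my_countP_excl {β : Type*} (s : Multiset β) (p q : β → Prop)
    [DecidablePred p] [DecidablePred q]
    (h : ∀ a ∈ s, ¬(p a ∧ q a)) :
    s.countP p + s.countP q ≤ s.card := by
  have := my_countP_add_eq s p q
  have h1 := Multiset.countP_le_card (fun a => p a ∨ q a) s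
  have h2 : s.countP (fun a => p a ∧ q a) = 0 := Multiset.countP_eq_zero.2 h
  omega

theorem stmt4 [DecidableEq α]
    (V : Multiset (List α)) (hV : ∀ v ∈ V, IsRanking v)
    (x y z t : α) (hxy : x ≠ y) (hxz : x ≠ z) (hxt : x ≠ t)
    (hyz : y ≠ z) (hyt : y ≠ t) (hzt : z ≠ t)
    (hzx : geq V (3/4) z x) (hxy34 : geq V (3/4) x y) (hxt34 : geq V (3/4) x t) :
    V.countP (fun v => v.idxOf y < v.idxOf x ∧ v.idxOf y < v.idxOf t)
      + V.countP (fun v => v.idxOf y < v.idxOf z ∧ v.idxOf y < v.idxOf t)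
    ≤ V.countP (fun v => v.idxOf x < v.idxOf y ∧ v.idxOf x < v.idxOf t)
      + V.countP (fun v => v.idxOf z < v.idxOf y ∧ v.idxOf z < v.idxOf t) := by
  classical
  set n := V.card with hn
  set czx := V.countP (fun v => v.idxOf z < v.idxOf x) with hczx
  set cxy := V.countP (fun v => v.idxOf x < v.idxOf y) with hcxy
  set cxt := V.countP (fun v => v.idxOf x < v.idxOf t) with hcxt
  set czy := V.countP (fun v => v.idxOf z < v.idxOf y) with hczy
  have g1 : 3 * n ≤ 4 * czx := by
    have h0 := hzx; unfold geq at h0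
    have h4 : (3:ℝ) * n ≤ 4 * czx := by
      rw [hczx]; push_cast; nlinarith [h0]
    exact_mod_cast h4
  have g2 : 3 * n ≤ 4 * cxy := by
    have h0 := hxy34; unfold geq at h0
    have h4 : (3:ℝ) * n ≤ 4 * cxy := by
      rw [hcxy]; push_cast; nlinarith [h0]
    exact_mod_cast h4
  have g3 : 3 * n ≤ 4 * cxt := by
    have h0 := hxt34; unfold geq at h0
    have h4 : (3:ℝ) * n ≤ 4 * cxt := by
      rw [hcxt]; push_cast; nlinarith [h0]
    exact_mod_cast h4
  have hA : V.countP (fun v => v.idxOf y < v.idxOf x ∧ v.idxOf y < v.idxOf t)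
      ≤ V.countP (fun v => v.idxOf y < v.idxOf x) :=
    my_countP_mono _ _ _ (fun v _ h => h.1)
  have hB : V.countP (fun v => v.idxOf y < v.idxOf z ∧ v.idxOf y < v.idxOf t)
      ≤ V.countP (fun v => v.idxOf y < v.idxOf z) :=
    my_countP_mono _ _ _ (fun v _ h => h.1)
  have hAx : V.countP (fun v => v.idxOf y < v.idxOf x) + cxy ≤ n := by
    rw [hcxy, hn]
    exact my_countP_excl _ _ _ (fun v _ h => by omega)
  have hBz : V.countP (fun v => v.idxOf y < v.idxOf z) + czy ≤ n := by
    rw [hczy, hn]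
    exact my_countP_excl _ _ _ (fun v _ h => by omega)
  have h3 : czx + cxy ≤ n + czy := by
    rw [hczx, hcxy, hczy, hn]
    exact my_countP_trans _ _ _ _ (fun v _ h => by omega)
  have h4 : cxy + cxt ≤ n
      + V.countP (fun v => v.idxOf x < v.idxOf y ∧ v.idxOf x < v.idxOf t) := by
    rw [hcxy, hcxt, hn]
    exact my_countP_trans _ _ _ _ (fun v _ h => ⟨h.1, h.2⟩)
  have h5 : czx
      + V.countP (fun v => v.idxOf x < v.idxOf y ∧ v.idxOf x < v.idxOf t)
      ≤ n + V.countP (fun v => v.idxOf z < v.idxOf y ∧ v.idxOf z < v.idxOf t) := by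
    rw [hczx, hn]
    exact my_countP_trans _ _ _ _ (fun v _ h => by omega)
  omega
end

section
/- Let C = {x, z} ∪ J be a partition of the set of alternatives of an election with voting profile V such that z ≥_{3/4} x and x ≥_{3/4} y for all y ∈ J. Then for every partition J = A ∪ B ∪ C' into pairwise disjoint linearly ordered sets with B nonempty, d³(A z B x C', V) > d³(A z x B C', V). -/
open Finset

variable {α : Type}

lemma d3_eq [Fintype α] [DecidableEq α] (l v : List α) :
    d3 l v = ∑ S ∈ (univ : Finset α).powerset,
      if (S.card ≤ 3 ∧ ∃ a ∈ S, ∃ b ∈ S, a ≠ b ∧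
        (∀ c ∈ S, l.idxOf a ≤ l.idxOf c) ∧ (∀ c ∈ S, v.idxOf b ≤ v.idxOf c))
      then 1 else 0 := by
  rw [d3, Finset.card_filter]

lemma d3V_eq [Fintype α] [DecidableEq α] (l : List α) (V : Multiset (List α)) :
    d3V l V = ∑ S ∈ (univ : Finset α).powerset, V.countP (fun v => S.card ≤ 3 ∧
      ∃ a ∈ S, ∃ b ∈ S, a ≠ b ∧
        (∀ c ∈ S, l.idxOf a ≤ l.idxOf c) ∧ (∀ c ∈ S, v.idxOf b ≤ v.idxOf c)) := by
  unfold d3V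
  refine Multiset.induction_on V ?_ ?_
  · simp
  · intro a s ih
    rw [Multiset.map_cons, Multiset.sum_cons, ih, d3_eq, ← Finset.sum_add_distrib]
    exact Finset.sum_congr rfl fun S _ => by
      rw [Multiset.countP_cons]
      split_ifs <;> omega

lemma myCountP_le {β : Type} (V : Multiset β) (p q : β → Prop) [DecidablePred p]
    [DecidablePred q] (h : ∀ v ∈ V, p v → q v) : V.countP p ≤ V.countP q := by
  revert h
  refine Multiset.induction_on V ?_ ?_
  · intro; simp
  · intro a s ih h
    have h1 := h a (Multiset.mem_cons_self a s)
    have h2 := ih (fun v hv hp => h v (Multiset.mem_cons_of_mem hv) hp)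
    simp only [Multiset.countP_cons]
    by_cases hp : p a
    · simp [hp, h1 hp]; omega
    · simp [hp]; split_ifs <;> omega

lemma myCountP_le_add {β : Type} (V : Multiset β) (p q r : β → Prop) [DecidablePred p]
    [DecidablePred q] [DecidablePred r] (h : ∀ v ∈ V, p v → q v ∨ r v) :
    V.countP p ≤ V.countP q + V.countP r := by
  revert h
  refine Multiset.induction_on V ?_ ?_
  · intro; simp
  · intro a s ih h
    have h1 := h a (Multiset.mem_cons_self a s)
    have h2 := ih (fun v hv hp => h v (Multiset.mem_cons_of_mem hv) hp)
    simp only [Multiset.countP_cons]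
    by_cases hp : p a
    · rcases h1 hp with hq | hr
      · simp [hp, hq]; split_ifs <;> omega
      · simp [hp, hr]; split_ifs <;> omega
    · simp [hp]; split_ifs <;> omega

lemma exists_top_iff [DecidableEq α] {l v : List α} (hl : IsRanking l) (hv : IsRanking v)
    {S : Finset α} {t : α} (htS : t ∈ S) (htmin : ∀ c ∈ S, l.idxOf t ≤ l.idxOf c) :
    (∃ a ∈ S, ∃ b ∈ S, a ≠ b ∧ (∀ c ∈ S, l.idxOf a ≤ l.idxOf c) ∧
      (∀ c ∈ S, v.idxOf b ≤ v.idxOf c))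
    ↔ ¬ (∀ c ∈ S, v.idxOf t ≤ v.idxOf c) := by
  constructor
  · rintro ⟨a, haS, b, hbS, hab, hal, hbv⟩ htop
    have ha : a = t := by
      have := le_antisymm (hal t htS) (htmin a haS)
      exact (List.idxOf_inj (hl.2 a)).1 this
    have hb : b = t := by
      have := le_antisymm (hbv t htS) (htop b hbS)
      exact (List.idxOf_inj (hv.2 b)).1 this
    exact hab (ha.trans hb.symm)
  · intro hnot
    obtain ⟨u, huS, humin⟩ := Finset.exists_min_image S (fun c => v.idxOf c) ⟨t, htS⟩
    have hut : t ≠ u := by rintro rfl; exact hnot humin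
    exact ⟨t, htS, u, huS, hut, htmin, humin⟩

theorem stmt6 [Fintype α] [DecidableEq α]
    (V : Multiset (List α)) (hV0 : V ≠ 0) (hV : ∀ v ∈ V, IsRanking v)
    (x z : α) (hxz : x ≠ z)
    (hz : geq V (3/4) z x)
    (hx : ∀ y : α, y ≠ x → y ≠ z → geq V (3/4) x y)
    (A B C' : List α) (hB : B ≠ [])
    (hrank : IsRanking (A ++ z :: (B ++ x :: C'))) :
    d3V (A ++ z :: x :: (B ++ C')) V < d3V (A ++ z :: (B ++ x :: C')) V := by
  classical
  set π : List α := A ++ z :: (B ++ x :: C') with hπdef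
  set π' : List α := A ++ z :: x :: (B ++ C') with hπ'def
  have hperm : π.Perm π' := List.Perm.append_left A (List.Perm.cons z List.perm_middle)
  have hrank' : IsRanking π' := ⟨hperm.nodup_iff.1 hrank.1, fun a => hperm.mem_iff.1 (hrank.2 a)⟩
  -- disjointness facts
  have hnd := hrank.1
  rw [hπdef, List.nodup_append] at hnd
  obtain ⟨ndA, ndZ, dAZ⟩ := hnd
  rw [List.nodup_cons] at ndZ
  obtain ⟨hzmem, ndBXC⟩ := ndZ
  rw [List.nodup_append] at ndBXC
  obtain ⟨ndB, ndXC, dBXC⟩ := ndBXC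
  rw [List.nodup_cons] at ndXC
  obtain ⟨hxC, ndC⟩ := ndXC
  have zA : z ∉ A := fun h => dAZ z h z (by simp) rfl
  have xA : x ∉ A := fun h => dAZ x h x (by simp) rfl
  have BA : ∀ b ∈ B, b ∉ A := fun b hb hA => dAZ b hA b (by simp [hb]) rfl
  have CA : ∀ c ∈ C', c ∉ A := fun c hc hA => dAZ c hA c (by simp [hc]) rfl
  have zB : z ∉ B := fun h => hzmem (by simp [h])
  have zC : z ∉ C' := fun h => hzmem (by simp [h])
  have xB : x ∉ B := fun h => dBXC x h x (by simp) rfl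
  have BC : ∀ c ∈ C', c ∉ B := fun c hc hb => dBXC c hb c (by simp [hc]) rfl
  have hcls : ∀ c : α, c ∈ A ∨ c = z ∨ c ∈ B ∨ c = x ∨ c ∈ C' := by
    intro c
    have := hrank.2 c
    rw [hπdef] at this
    simp only [List.mem_append, List.mem_cons] at this
    tauto
  -- index formulas
  have keyA : ∀ a ∈ A, π.idxOf a < A.length ∧ π'.idxOf a = π.idxOf a := by
    intro a ha
    rw [hπdef, hπ'def, List.idxOf_append_of_mem ha, List.idxOf_append_of_mem ha]
    exact ⟨List.idxOf_lt_length_iff.2 ha, rfl⟩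
  have keyz : π.idxOf z = A.length ∧ π'.idxOf z = A.length := by
    rw [hπdef, hπ'def, List.idxOf_append_of_notMem zA, List.idxOf_append_of_notMem zA,
      List.idxOf_cons_self, List.idxOf_cons_self]
    exact ⟨rfl, rfl⟩
  have keyB : ∀ t ∈ B, B.idxOf t < B.length ∧
      π.idxOf t = A.length + 1 + B.idxOf t ∧ π'.idxOf t = A.length + 2 + B.idxOf t := by
    intro t ht
    have htz : z ≠ t := fun h => zB (h ▸ ht)
    have htx : x ≠ t := fun h => xB (h ▸ ht)
    refine ⟨List.idxOf_lt_length_iff.2 ht, ?_, ?_⟩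
    · rw [hπdef, List.idxOf_append_of_notMem (BA t ht), List.idxOf_cons_ne _ htz,
        List.idxOf_append_of_mem ht]
      omega
    · rw [hπ'def, List.idxOf_append_of_notMem (BA t ht), List.idxOf_cons_ne _ htz,
        List.idxOf_cons_ne _ htx, List.idxOf_append_of_mem ht]
      omega
  have keyx : π.idxOf x = A.length + 1 + B.length ∧ π'.idxOf x = A.length + 1 := by
    constructor
    · rw [hπdef, List.idxOf_append_of_notMem xA, List.idxOf_cons_ne _ (Ne.symm hxz),
        List.idxOf_append_of_notMem xB, List.idxOf_cons_self]
      omega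
    · rw [hπ'def, List.idxOf_append_of_notMem xA, List.idxOf_cons_ne _ (Ne.symm hxz),
        List.idxOf_cons_self]
  have keyC : ∀ c ∈ C', π.idxOf c = A.length + 2 + B.length + C'.idxOf c ∧
      π'.idxOf c = A.length + 2 + B.length + C'.idxOf c := by
    intro c hc
    have hcz : z ≠ c := fun h => zC (h ▸ hc)
    have hcx : x ≠ c := fun h => hxC (h ▸ hc)
    constructor
    · rw [hπdef, List.idxOf_append_of_notMem (CA c hc), List.idxOf_cons_ne _ hcz,
        List.idxOf_append_of_notMem (BC c hc), List.idxOf_cons_ne _ hcx]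
      omega
    · rw [hπ'def, List.idxOf_append_of_notMem (CA c hc), List.idxOf_cons_ne _ hcz,
        List.idxOf_cons_ne _ hcx, List.idxOf_append_of_notMem (BC c hc)]
      omega
  have key : ∀ t : α,
      (t ∈ A ∧ π.idxOf t < A.length ∧ π'.idxOf t = π.idxOf t) ∨
      (t = z ∧ π.idxOf t = A.length ∧ π'.idxOf t = A.length) ∨
      (t ∈ B ∧ B.idxOf t < B.length ∧ π.idxOf t = A.length + 1 + B.idxOf t ∧
        π'.idxOf t = A.length + 2 + B.idxOf t) ∨
      (t = x ∧ π.idxOf t = A.length + 1 + B.length ∧ π'.idxOf t = A.length + 1) ∨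
      (t ∈ C' ∧ π.idxOf t = A.length + 2 + B.length + C'.idxOf t ∧
        π'.idxOf t = A.length + 2 + B.length + C'.idxOf t) := by
    intro t
    rcases hcls t with ht | rfl | ht | rfl | ht
    · exact Or.inl ⟨ht, keyA t ht⟩
    · exact Or.inr (Or.inl ⟨rfl, keyz⟩)
    · exact Or.inr (Or.inr (Or.inl ⟨ht, keyB t ht⟩))
    · exact Or.inr (Or.inr (Or.inr (Or.inl ⟨rfl, keyx⟩)))
    · exact Or.inr (Or.inr (Or.inr (Or.inr ⟨ht, keyC t ht⟩)))
  -- pair agreement: order comparisons transfer from π to π' except B-vs-x pairs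
  have pairag : ∀ t c : α, (t ∈ B → c ≠ x) →
      π.idxOf t ≤ π.idxOf c → π'.idxOf t ≤ π'.idxOf c := by
    intro t c hno h
    rcases key t with ⟨htA, e1, e2⟩ | ⟨htz, e1, e2⟩ | ⟨htB, hi, e1, e2⟩ |
        ⟨htx, e1, e2⟩ | ⟨htC, e1, e2⟩ <;>
      rcases key c with ⟨hcA, f1, f2⟩ | ⟨hcz, f1, f2⟩ | ⟨hcB, hj, f1, f2⟩ |
        ⟨hcx, f1, f2⟩ | ⟨hcC, f1, f2⟩ <;>
      first
      | omega
      | exact absurd hcx (hno htB)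
  -- cardinality facts
  have hn : 1 ≤ Multiset.card V := Multiset.card_pos.2 hV0
  -- majority bound
  have hmaj : ∀ y : α, y ≠ x → y ≠ z →
      4 * (V.countP fun v => v.idxOf y < v.idxOf x) ≤ Multiset.card V := by
    intro y hyx hyz
    have hg := hx y hyx hyz
    rw [geq] at hg
    have hsplit := Multiset.card_eq_countP_add_countP (fun v => v.idxOf x < v.idxOf y) V
    have hneg : (V.countP fun v => ¬ v.idxOf x < v.idxOf y)
        = (V.countP fun v => v.idxOf y < v.idxOf x) := by
      refine Multiset.countP_congr rfl fun v hv => ?_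
      have hvr := hV v hv
      have hne : v.idxOf y ≠ v.idxOf x :=
        fun h => hyx ((List.idxOf_inj (hvr.2 y)).1 h)
      rw [eq_iff_iff, not_lt]
      omega
    rw [hneg] at hsplit
    have h3 : 3 * Multiset.card V ≤ 4 * (V.countP fun v => v.idxOf x < v.idxOf y) := by
      have : (3 : ℝ) * Multiset.card V ≤ 4 * (V.countP fun v => v.idxOf x < v.idxOf y) := by
        nlinarith [hg]
      exact_mod_cast this
    omega
  -- converting the countP predicate to "top of S in v differs from t"
  have cnt_eq : ∀ (l : List α), IsRanking l → ∀ (S : Finset α), S.card ≤ 3 →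
      ∀ t ∈ S, (∀ c ∈ S, l.idxOf t ≤ l.idxOf c) →
      (V.countP fun v => S.card ≤ 3 ∧ ∃ a ∈ S, ∃ b ∈ S, a ≠ b ∧
        (∀ c ∈ S, l.idxOf a ≤ l.idxOf c) ∧ (∀ c ∈ S, v.idxOf b ≤ v.idxOf c))
      = V.countP fun v => ¬ ∀ c ∈ S, v.idxOf t ≤ v.idxOf c := by
    intro l hl S hS3 t htS htmin
    refine Multiset.countP_congr rfl fun v hv => ?_
    rw [eq_iff_iff]
    constructor
    · rintro ⟨-, hP⟩
      exact (exists_top_iff hl (hV v hv) htS htmin).1 hP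
    · intro h
      exact ⟨hS3, (exists_top_iff hl (hV v hv) htS htmin).2 h⟩
  -- the strict inequality on "differing" sets
  have hdiff : ∀ S : Finset α, S.card ≤ 3 → x ∈ S → ∀ t ∈ S, t ∈ B →
      (∀ c ∈ S, π.idxOf t ≤ π.idxOf c) →
      (V.countP fun v => S.card ≤ 3 ∧ ∃ a ∈ S, ∃ b ∈ S, a ≠ b ∧
        (∀ c ∈ S, π'.idxOf a ≤ π'.idxOf c) ∧ (∀ c ∈ S, v.idxOf b ≤ v.idxOf c)) <
      (V.countP fun v => S.card ≤ 3 ∧ ∃ a ∈ S, ∃ b ∈ S, a ≠ b ∧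
        (∀ c ∈ S, π.idxOf a ≤ π.idxOf c) ∧ (∀ c ∈ S, v.idxOf b ≤ v.idxOf c)) := by
    intro S hS3 hxS t htS htB htmin
    obtain ⟨hiB, et1, et2⟩ := keyB t htB
    have htx : t ≠ x := fun h => xB (h ▸ htB)
    have htz : t ≠ z := fun h => zB (h ▸ htB)
    have hzS : z ∉ S := by
      intro hzS
      have h1 := htmin z hzS
      rw [et1, keyz.1] at h1
      omega
    have hAS : ∀ a ∈ A, a ∉ S := by
      intro a ha haS
      have h1 := htmin a haS
      have h2 := (keyA a ha).1
      rw [et1] at h1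
      omega
    have hminx : ∀ c ∈ S, π'.idxOf x ≤ π'.idxOf c := by
      intro c hcS
      rcases hcls c with hc | rfl | hc | rfl | hc
      · exact (hAS c hc hcS).elim
      · exact (hzS hcS).elim
      · obtain ⟨hj, f1, f2⟩ := keyB c hc
        rw [f2, keyx.2]
        omega
      · exact le_refl _
      · obtain ⟨f1, f2⟩ := keyC c hc
        rw [f2, keyx.2]
        omega
    -- decompose S as {x, t, y2}
    obtain ⟨y2, hy2S, hy2x, hcover⟩ :
        ∃ y2, y2 ∈ S ∧ y2 ≠ x ∧ ∀ c ∈ S, c = x ∨ c = t ∨ c = y2 := by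
      by_cases hh : ∃ u ∈ S.erase x, u ≠ t
      · obtain ⟨u, huT, hut⟩ := hh
        refine ⟨u, (Finset.mem_erase.1 huT).2, (Finset.mem_erase.1 huT).1, ?_⟩
        intro c hcS
        by_cases hcx : c = x
        · exact Or.inl hcx
        by_cases hct : c = t
        · exact Or.inr (Or.inl hct)
        by_cases hcu : c = u
        · exact Or.inr (Or.inr hcu)
        exfalso
        have hsub : ({c, t, u} : Finset α) ⊆ S.erase x := by
          intro w hw
          simp only [Finset.mem_insert, Finset.mem_singleton] at hw
          rcases hw with rfl | rfl | rfl
          · exact Finset.mem_erase.2 ⟨hcx, hcS⟩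
          · exact Finset.mem_erase.2 ⟨htx, htS⟩
          · exact huT
        have hc3 : ({c, t, u} : Finset α).card = 3 := by
          rw [Finset.card_insert_of_notMem (by simp [hct, hcu]),
            Finset.card_insert_of_notMem
              (by simp only [Finset.mem_singleton]; exact fun h => hut h.symm),
            Finset.card_singleton]
        have hle2 : (S.erase x).card ≤ 2 := by
          have := Finset.card_erase_of_mem hxS
          omega
        have := Finset.card_le_card hsub
        omega
      · push_neg at hh
        exact ⟨t, htS, htx, fun c hcS => by
          by_cases hcx : c = x
          · exact Or.inl hcx
          · exact Or.inr (Or.inl (hh c (Finset.mem_erase.2 ⟨hcx, hcS⟩)))⟩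
    have hy2z : y2 ≠ z := fun h => hzS (h ▸ hy2S)
    have hb1 := hmaj t htx htz
    have hb2 := hmaj y2 hy2x hy2z
    rw [cnt_eq π' hrank' S hS3 x hxS hminx, cnt_eq π hrank S hS3 t htS htmin]
    have hub : (V.countP fun v => ¬ ∀ c ∈ S, v.idxOf x ≤ v.idxOf c)
        ≤ (V.countP fun v => v.idxOf t < v.idxOf x)
          + (V.countP fun v => v.idxOf y2 < v.idxOf x) := by
      refine myCountP_le_add V _ _ _ fun v hv hnv => ?_
      push_neg at hnv
      obtain ⟨c, hcS, hc⟩ := hnv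
      rcases hcover c hcS with rfl | rfl | rfl
      · omega
      · exact Or.inl hc
      · exact Or.inr hc
    have hlb : (V.countP fun v => ∀ c ∈ S, v.idxOf t ≤ v.idxOf c)
        ≤ (V.countP fun v => v.idxOf t < v.idxOf x) := by
      refine myCountP_le V _ _ fun v hv hall => ?_
      have h1 := hall x hxS
      have hne : v.idxOf t ≠ v.idxOf x :=
        fun h => htx ((List.idxOf_inj ((hV v hv).2 t)).1 h)
      omega
    have hsplit := Multiset.card_eq_countP_add_countP
      (fun v => ∀ c ∈ S, v.idxOf t ≤ v.idxOf c) V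
    omega
  -- the weak inequality on all sets
  have hle : ∀ S ∈ (univ : Finset α).powerset,
      (V.countP fun v => S.card ≤ 3 ∧ ∃ a ∈ S, ∃ b ∈ S, a ≠ b ∧
        (∀ c ∈ S, π'.idxOf a ≤ π'.idxOf c) ∧ (∀ c ∈ S, v.idxOf b ≤ v.idxOf c))
      ≤ (V.countP fun v => S.card ≤ 3 ∧ ∃ a ∈ S, ∃ b ∈ S, a ≠ b ∧
        (∀ c ∈ S, π.idxOf a ≤ π.idxOf c) ∧ (∀ c ∈ S, v.idxOf b ≤ v.idxOf c)) := by
    intro S _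
    by_cases hS3 : S.card ≤ 3
    · by_cases hSne : S.Nonempty
      · obtain ⟨t, htS, htmin⟩ := Finset.exists_min_image S (fun c => π.idxOf c) hSne
        by_cases hcase : t ∈ B ∧ x ∈ S
        · exact le_of_lt (hdiff S hS3 hcase.2 t htS hcase.1 htmin)
        · have htmin' : ∀ c ∈ S, π'.idxOf t ≤ π'.idxOf c := fun c hcS =>
            pairag t c (fun htB hcx => hcase ⟨htB, hcx ▸ hcS⟩) (htmin c hcS)
          rw [cnt_eq π' hrank' S hS3 t htS htmin', cnt_eq π hrank S hS3 t htS htmin]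
      · have e1 : (V.countP fun v => S.card ≤ 3 ∧ ∃ a ∈ S, ∃ b ∈ S, a ≠ b ∧
            (∀ c ∈ S, π'.idxOf a ≤ π'.idxOf c) ∧ (∀ c ∈ S, v.idxOf b ≤ v.idxOf c)) = 0 :=
          Multiset.countP_eq_zero.2 fun v hv h => by
            obtain ⟨a, ha, -⟩ := h.2
            exact hSne ⟨a, ha⟩
        rw [e1]
        exact Nat.zero_le _
    · have e1 : (V.countP fun v => S.card ≤ 3 ∧ ∃ a ∈ S, ∃ b ∈ S, a ≠ b ∧
          (∀ c ∈ S, π'.idxOf a ≤ π'.idxOf c) ∧ (∀ c ∈ S, v.idxOf b ≤ v.idxOf c)) = 0 :=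
        Multiset.countP_eq_zero.2 fun v hv h => hS3 h.1
      rw [e1]
      exact Nat.zero_le _
  -- the witness set {x, head of B}
  have hbB : B.head hB ∈ B := List.head_mem hB
  have hbx : B.head hB ≠ x := fun h => xB (h ▸ hbB)
  have hS0card : ({x, B.head hB} : Finset α).card ≤ 3 := by
    refine le_trans (Finset.card_insert_le _ _) ?_
    simp
  have hxS0 : x ∈ ({x, B.head hB} : Finset α) := Finset.mem_insert_self _ _
  have hbS0 : B.head hB ∈ ({x, B.head hB} : Finset α) := by simp
  have hminb : ∀ c ∈ ({x, B.head hB} : Finset α),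
      π.idxOf (B.head hB) ≤ π.idxOf c := by
    intro c hc
    obtain ⟨hib, eb1, eb2⟩ := keyB _ hbB
    simp only [Finset.mem_insert, Finset.mem_singleton] at hc
    rcases hc with rfl | rfl
    · rw [eb1, keyx.1]
      omega
    · exact le_refl _
  have hlt := hdiff {x, B.head hB} hS0card hxS0 (B.head hB) hbS0 hbB hminb
  rw [d3V_eq, d3V_eq]
  exact Finset.sum_lt_sum hle
    ⟨{x, B.head hB}, Finset.mem_powerset.2 (Finset.subset_univ _), hlt⟩
end

section
/- Let V be an election over a finite set C of alternatives, let x, y ∈ C be distinct, and let L, Z, R be pairwise disjoint linearly ordered subsets of C with C = L ∪ {y} ∪ Z ∪ {x} ∪ R. Consider the rankings π: L > y > Z > x > R, σ₁*: L > Z > x > y > R, and σ₂*: L > x > y > Z > R, and set Δᵢ = d³(π, V) − d³(σᵢ*, V) for i ∈ {1,2}. Then Δ₁ + Δ₂ = 2·Σ_{t ∈ R} Q_{x,y,t} + 2δ_{xy} + Σ_{z ∈ Z} P_{x,y,z} − Σ S_{y,x,z,t}, where the last sum ranges over all pairs (z,t) with z ∈ Z, t ∈ Z ∪ R, and z ranked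 before t in π. -/
open Finset

variable {α : Type}

namespace Stmt11Aux

variable {α : Type} [DecidableEq α]

/-- indicator of a proposition, in ℤ -/
noncomputable def chi (p : Prop) : ℤ := @ite _ p (Classical.propDecidable p) 1 0

lemma chi_true {p : Prop} (h : p) : chi p = 1 := by simp [chi, h]

lemma chi_false {p : Prop} (h : ¬ p) : chi p = 0 := by simp [chi, h]

lemma chi_eq_ite (p : Prop) [Decidable p] : chi p = if p then 1 else 0 := by
  by_cases h : p <;> simp [chi, h]

lemma chi_congr {p q : Prop} (h : p ↔ q) : chi p = chi q := by
  by_cases hp : p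
  · rw [chi_true hp, chi_true (h.mp hp)]
  · rw [chi_false hp, chi_false (fun hq => hp (h.mpr hq))]

lemma chi_not_sub (p q : Prop) : chi (¬ p) - chi (¬ q) = chi q - chi p := by
  by_cases hp : p <;> by_cases hq : q <;> simp [chi, hp, hq]

/-- `a` is the top (minimum-index) element of `S` w.r.t. ranking `l`. -/
def mins (l : List α) (S : Finset α) (a : α) : Prop :=
  a ∈ S ∧ ∀ c ∈ S, l.idxOf a ≤ l.idxOf c

lemma idx_inj {l : List α} (hl : IsRanking l) {a b : α}
    (h : l.idxOf a = l.idxOf b) : a = b :=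
  (List.idxOf_inj (hl.2 a)).1 h

lemma idx_ne {l : List α} (hl : IsRanking l) {a b : α} (h : a ≠ b) :
    l.idxOf a ≠ l.idxOf b := fun hc => h (idx_inj hl hc)

lemma mins_unique {l : List α} (hl : IsRanking l) {S : Finset α} {a b : α}
    (ha : mins l S a) (hb : mins l S b) : a = b :=
  idx_inj hl (le_antisymm (ha.2 b hb.1) (hb.2 a ha.1))

lemma mins_exists (l : List α) {S : Finset α} (hS : S.Nonempty) : ∃ a, mins l S a := by
  obtain ⟨a, ha, hmin⟩ := S.exists_min_image (fun c => l.idxOf c) hS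
  exact ⟨a, ha, hmin⟩

/-- the predicate inside the definition of `d3` -/
def cond3 (l m : List α) (S : Finset α) : Prop :=
  S.card ≤ 3 ∧ ∃ a ∈ S, ∃ b ∈ S, a ≠ b ∧
    (∀ c ∈ S, l.idxOf a ≤ l.idxOf c) ∧ (∀ c ∈ S, m.idxOf b ≤ m.idxOf c)

instance (l m : List α) : DecidablePred (cond3 l m) := fun S => by
  unfold cond3; infer_instance

lemma d3_sum [Fintype α] (l m : List α) :
    (d3 l m : ℤ) = ∑ S ∈ (Finset.univ : Finset α).powerset, chi (cond3 l m S) := by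
  rw [d3, Finset.card_filter]
  push_cast
  refine Finset.sum_congr rfl fun S _ => ?_
  exact (chi_eq_ite _).symm

lemma cond3_iff_not_mins {l v : List α} (hl : IsRanking l) (hv : IsRanking v)
    {S : Finset α} {w : α} (hcard : S.card ≤ 3) (hw : mins l S w) :
    cond3 l v S ↔ ¬ mins v S w := by
  constructor
  · rintro ⟨-, a, ha, b, hb, hab, h1, h2⟩ hmv
    have ha' : a = w := mins_unique hl ⟨ha, h1⟩ hw
    have hb' : b = w := mins_unique hv ⟨hb, h2⟩ hmv
    exact hab (ha'.trans hb'.symm)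
  · intro h
    obtain ⟨b, hb⟩ := mins_exists v ⟨w, hw.1⟩
    refine ⟨hcard, w, hw.1, b, hb.1, ?_, hw.2, hb.2⟩
    rintro rfl; exact h hb

lemma cond3_congr {l l' v : List α} {S : Finset α}
    (h : ∀ c, mins l S c ↔ mins l' S c) : cond3 l v S ↔ cond3 l' v S := by
  constructor <;> rintro ⟨hc, a, ha, b, hb, hab, h1, h2⟩
  · exact ⟨hc, a, ha, b, hb, hab, ((h a).mp ⟨ha, h1⟩).2, h2⟩
  · exact ⟨hc, a, ha, b, hb, hab, ((h a).mpr ⟨ha, h1⟩).2, h2⟩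

end Stmt11Aux
namespace Stmt11Aux

variable {α : Type} [DecidableEq α]

set_option linter.unusedSectionVars false

section Master

variable {v P M Q : List α} {w : α}

/-- membership classification for a ranking of the shape `P ++ w :: (M ++ Q)` -/
lemma classify (hl : IsRanking (P ++ w :: (M ++ Q))) (a : α) :
    a ∈ P ∨ a = w ∨ a ∈ M ∨ a ∈ Q := by
  have h := hl.2 a
  simp only [List.mem_append, List.mem_cons] at h
  tauto

lemma ranking_sigma (hl : IsRanking (P ++ w :: (M ++ Q))) :
    IsRanking (P ++ (M ++ w :: Q)) := by
  have hperm : (P ++ w :: (M ++ Q)).Perm (P ++ (M ++ w :: Q)) :=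
    (List.perm_middle.symm : (w :: (M ++ Q)).Perm (M ++ w :: Q)).append_left P
  exact ⟨hperm.nodup_iff.mp hl.1, fun a => hperm.mem_iff.mp (hl.2 a)⟩

structure MasterFacts (P M Q : List α) (w : α) : Prop where
  hwP : w ∉ P
  hwM : w ∉ M
  hwQ : w ∉ Q
  hMP : ∀ a ∈ M, a ∉ P
  hQP : ∀ a ∈ Q, a ∉ P
  hMQ : ∀ a ∈ M, a ∉ Q
  hMnd : M.Nodup

lemma masterFacts (hl : IsRanking (P ++ w :: (M ++ Q))) : MasterFacts P M Q w := by
  have h := hl.1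
  rw [List.nodup_append] at h
  obtain ⟨hPnd, hrest, hdisj⟩ := h
  rw [List.nodup_cons, List.nodup_append] at hrest
  obtain ⟨hwMQ, hMnd, hQnd, hMQdis⟩ := hrest
  refine ⟨?_, ?_, ?_, ?_, ?_, ?_, hMnd⟩
  · exact fun h => hdisj w h w List.mem_cons_self rfl
  · exact fun h => hwMQ (List.mem_append_left _ h)
  · exact fun h => hwMQ (List.mem_append_right _ h)
  · exact fun a ha hP => hdisj a hP a (List.mem_cons_of_mem _ (List.mem_append_left _ ha)) rfl
  · exact fun a ha hP => hdisj a hP a (List.mem_cons_of_mem _ (List.mem_append_right _ ha)) rfl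
  · exact fun a ha hQ => hMQdis a ha a hQ rfl

section Idx

variable (hf : MasterFacts P M Q w)
include hf

lemma iπw : (P ++ w :: (M ++ Q)).idxOf w = P.length := by
  rw [List.idxOf_append_of_notMem hf.hwP, List.idxOf_cons_self]
  omega

lemma iπM {a : α} (ha : a ∈ M) :
    (P ++ w :: (M ++ Q)).idxOf a = P.length + 1 + M.idxOf a := by
  rw [List.idxOf_append_of_notMem (hf.hMP a ha),
    List.idxOf_cons_ne _ (fun h => hf.hwM (by rw [h]; exact ha)),
    List.idxOf_append_of_mem ha]
  omega

lemma iπQ {t : α} (ht : t ∈ Q) :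
    (P ++ w :: (M ++ Q)).idxOf t = P.length + 1 + M.length + Q.idxOf t := by
  rw [List.idxOf_append_of_notMem (hf.hQP t ht),
    List.idxOf_cons_ne _ (fun h => hf.hwQ (by rw [h]; exact ht)),
    List.idxOf_append_of_notMem (fun h => hf.hMQ t h ht)]
  omega

lemma iπP {a : α} (ha : a ∈ P) :
    (P ++ w :: (M ++ Q)).idxOf a = P.idxOf a :=
  List.idxOf_append_of_mem ha

lemma iσw : (P ++ (M ++ w :: Q)).idxOf w = P.length + M.length := by
  rw [List.idxOf_append_of_notMem hf.hwP,
    List.idxOf_append_of_notMem hf.hwM, List.idxOf_cons_self]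
  omega

lemma iσM {a : α} (ha : a ∈ M) :
    (P ++ (M ++ w :: Q)).idxOf a = P.length + M.idxOf a := by
  rw [List.idxOf_append_of_notMem (hf.hMP a ha), List.idxOf_append_of_mem ha]

lemma iσQ {t : α} (ht : t ∈ Q) :
    (P ++ (M ++ w :: Q)).idxOf t = P.length + M.length + 1 + Q.idxOf t := by
  rw [List.idxOf_append_of_notMem (hf.hQP t ht),
    List.idxOf_append_of_notMem (fun h => hf.hMQ t h ht),
    List.idxOf_cons_ne _ (fun h => hf.hwQ (by rw [h]; exact ht))]
  omega

lemma iσP {a : α} (ha : a ∈ P) :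
    (P ++ (M ++ w :: Q)).idxOf a = P.idxOf a :=
  List.idxOf_append_of_mem ha

end Idx

/-- If `S` is not of the "difference" shape then any `π`-minimum of `S` is
also a `σ`-minimum of `S`. -/
lemma transfer (hl : IsRanking (P ++ w :: (M ++ Q)))
    {S : Finset α}
    (hS : ¬ (w ∈ S ∧ (∀ p ∈ P, p ∉ S) ∧ ∃ a ∈ M, a ∈ S))
    {c : α} (hc : mins (P ++ w :: (M ++ Q)) S c) :
    mins (P ++ (M ++ w :: Q)) S c := by
  have hf := masterFacts hl
  have hcS := hc.1
  by_cases hPS : ∃ p ∈ S, p ∈ P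
  · -- the minimum lies in P, same on both sides
    obtain ⟨p, hpS, hpP⟩ := hPS
    have hcP : c ∈ P := by
      have h1 : (P ++ w :: (M ++ Q)).idxOf c ≤ (P ++ w :: (M ++ Q)).idxOf p :=
        hc.2 p hpS
      have h2 := iπP hf hpP
      have h3 : P.idxOf p < P.length := List.idxOf_lt_length_iff.2 hpP
      rcases classify hl c with h | h | h | h
      · exact h
      · subst h; rw [iπw hf] at h1; omega
      · rw [iπM hf h, h2] at h1; omega
      · rw [iπQ hf h, h2] at h1; omega
    refine ⟨hcS, fun c' hc' => ?_⟩
    rw [iσP hf hcP]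
    have hcPlen : P.idxOf c < P.length := List.idxOf_lt_length_iff.2 hcP
    have hmin := hc.2 c' hc'
    rw [iπP hf hcP] at hmin
    rcases classify hl c' with h | h | h | h
    · rw [iσP hf h]; rw [iπP hf h] at hmin; exact hmin
    · subst h; rw [iσw hf]; omega
    · rw [iσM hf h]; omega
    · rw [iσQ hf h]; omega
  · push_neg at hPS
    by_cases hwS : w ∈ S
    · have hnoM : ∀ a ∈ M, a ∉ S := by
        intro a ha haS
        exact hS ⟨hwS, fun p hp hpS => hPS p hpS hp, a, ha, haS⟩
      have hcw : c = w := by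
        rcases classify hl c with h | h | h | h
        · exact absurd h (hPS c hcS)
        · exact h
        · exact absurd hcS (hnoM c h)
        · have h1 := hc.2 w hwS
          rw [iπQ hf h, iπw hf] at h1; omega
      subst hcw
      refine ⟨hcS, fun c' hc' => ?_⟩
      rw [iσw hf]
      rcases classify hl c' with h | h | h | h
      · exact absurd h (hPS c' hc')
      · subst h; rw [iσw hf]
      · exact absurd hc' (hnoM c' h)
      · rw [iσQ hf h]; omega
    · rcases classify hl c with h | h | h | h
      · exact absurd h (hPS c hcS)
      · exact absurd (h ▸ hcS) hwS
      · -- c ∈ M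
        refine ⟨hcS, fun c' hc' => ?_⟩
        rw [iσM hf h]
        have hmin := hc.2 c' hc'
        rw [iπM hf h] at hmin
        have hcM : M.idxOf c < M.length := List.idxOf_lt_length_iff.2 h
        rcases classify hl c' with h' | h' | h' | h'
        · exact absurd h' (hPS c' hc')
        · exact absurd (h' ▸ hc') hwS
        · rw [iσM hf h']; rw [iπM hf h'] at hmin; omega
        · rw [iσQ hf h']; omega
      · -- c ∈ Q
        refine ⟨hcS, fun c' hc' => ?_⟩
        rw [iσQ hf h]
        have hmin := hc.2 c' hc'
        rw [iπQ hf h] at hmin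
        rcases classify hl c' with h' | h' | h' | h'
        · exact absurd h' (hPS c' hc')
        · exact absurd (h' ▸ hc') hwS
        · rw [iπM hf h'] at hmin
          have : M.idxOf c' < M.length := List.idxOf_lt_length_iff.2 h'
          omega
        · rw [iσQ hf h']; rw [iπQ hf h'] at hmin; omega

lemma mins_pi_iff_sigma (hl : IsRanking (P ++ w :: (M ++ Q)))
    {S : Finset α}
    (hS : ¬ (w ∈ S ∧ (∀ p ∈ P, p ∉ S) ∧ ∃ a ∈ M, a ∈ S)) (c : α) :
    mins (P ++ w :: (M ++ Q)) S c ↔ mins (P ++ (M ++ w :: Q)) S c := by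
  constructor
  · exact transfer hl hS
  · intro hc
    obtain ⟨c', hc'⟩ := mins_exists (P ++ w :: (M ++ Q)) ⟨c, hc.1⟩
    have h2 := transfer hl hS hc'
    have : c = c' := mins_unique (ranking_sigma hl) hc h2
    exact this ▸ hc'

end Master

end Stmt11Aux
namespace Stmt11Aux

variable {α : Type} [DecidableEq α]

set_option linter.unusedSectionVars false

section Master2

variable {v P M Q : List α} {w : α}

lemma card_pair3 (w a : α) : ({w, a} : Finset α).card ≤ 3 := by
  have h1 := Finset.card_insert_le w ({a} : Finset α)
  simp at h1 ⊢
  omega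

lemma card_triple3 (w a c : α) : ({w, a, c} : Finset α).card ≤ 3 := by
  have h1 := Finset.card_insert_le w ({a, c} : Finset α)
  have h2 := Finset.card_insert_le a ({c} : Finset α)
  simp at h1 h2 ⊢
  omega

lemma mins_pi_pair (hf : MasterFacts P M Q w) {a : α} (ha : a ∈ M) :
    mins (P ++ w :: (M ++ Q)) {w, a} w := by
  refine ⟨by simp, fun c hc => ?_⟩
  rw [iπw hf]
  rcases Finset.mem_insert.mp hc with h | h
  · subst h; rw [iπw hf]
  · rw [Finset.mem_singleton.mp h, iπM hf ha]; omega

lemma mins_sigma_pair (hf : MasterFacts P M Q w) {a : α} (ha : a ∈ M) :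
    mins (P ++ (M ++ w :: Q)) {w, a} a := by
  have hb : M.idxOf a < M.length := List.idxOf_lt_length_iff.2 ha
  refine ⟨by simp, fun c hc => ?_⟩
  rw [iσM hf ha]
  rcases Finset.mem_insert.mp hc with h | h
  · subst h; rw [iσw hf]; omega
  · rw [Finset.mem_singleton.mp h, iσM hf ha]

lemma mins_pi_tripleQ (hf : MasterFacts P M Q w) {a t : α} (ha : a ∈ M) (ht : t ∈ Q) :
    mins (P ++ w :: (M ++ Q)) {w, a, t} w := by
  refine ⟨by simp, fun c hc => ?_⟩
  rw [iπw hf]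
  rcases Finset.mem_insert.mp hc with h | h
  · subst h; rw [iπw hf]
  · rcases Finset.mem_insert.mp h with h' | h'
    · rw [h', iπM hf ha]; omega
    · rw [Finset.mem_singleton.mp h', iπQ hf ht]; omega

lemma mins_sigma_tripleQ (hf : MasterFacts P M Q w) {a t : α} (ha : a ∈ M) (ht : t ∈ Q) :
    mins (P ++ (M ++ w :: Q)) {w, a, t} a := by
  have hb : M.idxOf a < M.length := List.idxOf_lt_length_iff.2 ha
  refine ⟨by simp, fun c hc => ?_⟩
  rw [iσM hf ha]
  rcases Finset.mem_insert.mp hc with h | h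
  · subst h; rw [iσw hf]; omega
  · rcases Finset.mem_insert.mp h with h' | h'
    · rw [h', iσM hf ha]
    · rw [Finset.mem_singleton.mp h', iσQ hf ht]; omega

lemma mins_pi_tripleM (hf : MasterFacts P M Q w) {a b : α} (ha : a ∈ M) (hb : b ∈ M) :
    mins (P ++ w :: (M ++ Q)) {w, a, b} w := by
  refine ⟨by simp, fun c hc => ?_⟩
  rw [iπw hf]
  rcases Finset.mem_insert.mp hc with h | h
  · subst h; rw [iπw hf]
  · rcases Finset.mem_insert.mp h with h' | h'
    · rw [h', iπM hf ha]; omega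
    · rw [Finset.mem_singleton.mp h', iπM hf hb]; omega

lemma mins_sigma_tripleM (hf : MasterFacts P M Q w) {a b : α} (ha : a ∈ M) (hb : b ∈ M)
    (hab : M.idxOf a < M.idxOf b) :
    mins (P ++ (M ++ w :: Q)) {w, a, b} a := by
  have hba : M.idxOf a < M.length := List.idxOf_lt_length_iff.2 ha
  refine ⟨by simp, fun c hc => ?_⟩
  rw [iσM hf ha]
  rcases Finset.mem_insert.mp hc with h | h
  · subst h; rw [iσw hf]; omega
  · rcases Finset.mem_insert.mp h with h' | h'
    · rw [h', iσM hf ha]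
    · rw [Finset.mem_singleton.mp h', iσM hf hb]; omega

lemma fval_pair [Fintype α] (hv : IsRanking v) (hl : IsRanking (P ++ w :: (M ++ Q)))
    {a : α} (ha : a ∈ M) :
    chi (cond3 (P ++ w :: (M ++ Q)) v {w, a}) - chi (cond3 (P ++ (M ++ w :: Q)) v {w, a})
      = chi (v.idxOf a < v.idxOf w) - chi (v.idxOf w < v.idxOf a) := by
  have hf := masterFacts hl
  have hσ := ranking_sigma hl
  have hne : a ≠ w := fun h => hf.hwM (h ▸ ha)
  have hne2 : v.idxOf a ≠ v.idxOf w := idx_ne hv hne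
  rw [cond3_iff_not_mins hl hv (card_pair3 w a) (mins_pi_pair hf ha)]
  rw [cond3_iff_not_mins hσ hv (card_pair3 w a) (mins_sigma_pair hf ha)]
  rw [chi_not_sub]
  have e1 : mins v ({w, a} : Finset α) a ↔ v.idxOf a < v.idxOf w := by
    simp [mins]
    omega
  have e2 : mins v ({w, a} : Finset α) w ↔ v.idxOf w < v.idxOf a := by
    simp [mins]
    omega
  rw [chi_congr e1, chi_congr e2]

lemma fval3 [Fintype α] (hv : IsRanking v) (hl : IsRanking (P ++ w :: (M ++ Q)))
    {a c : α} (hwa : a ≠ w) (hwc : c ≠ w) (hac : a ≠ c)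
    (hπm : mins (P ++ w :: (M ++ Q)) {w, a, c} w)
    (hσm : mins (P ++ (M ++ w :: Q)) {w, a, c} a) :
    chi (cond3 (P ++ w :: (M ++ Q)) v {w, a, c})
        - chi (cond3 (P ++ (M ++ w :: Q)) v {w, a, c})
      = chi (v.idxOf a < v.idxOf w ∧ v.idxOf a < v.idxOf c)
        - chi (v.idxOf w < v.idxOf a ∧ v.idxOf w < v.idxOf c) := by
  have hσ := ranking_sigma hl
  have h1 : v.idxOf a ≠ v.idxOf w := idx_ne hv hwa
  have h2 : v.idxOf c ≠ v.idxOf w := idx_ne hv hwc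
  have h3 : v.idxOf a ≠ v.idxOf c := idx_ne hv hac
  rw [cond3_iff_not_mins hl hv (card_triple3 w a c) hπm]
  rw [cond3_iff_not_mins hσ hv (card_triple3 w a c) hσm]
  rw [chi_not_sub]
  have e1 : mins v ({w, a, c} : Finset α) a ↔
      (v.idxOf a < v.idxOf w ∧ v.idxOf a < v.idxOf c) := by
    simp [mins]
    omega
  have e2 : mins v ({w, a, c} : Finset α) w ↔
      (v.idxOf w < v.idxOf a ∧ v.idxOf w < v.idxOf c) := by
    simp [mins]
    omega
  rw [chi_congr e1, chi_congr e2]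

end Master2

end Stmt11Aux
namespace Stmt11Aux

variable {α : Type} [DecidableEq α]

set_option linter.unusedSectionVars false
set_option maxHeartbeats 1000000

lemma master [Fintype α] {v P M Q : List α} {w : α}
    (hv : IsRanking v) (hl : IsRanking (P ++ w :: (M ++ Q))) :
    (d3 (P ++ w :: (M ++ Q)) v : ℤ) - (d3 (P ++ (M ++ w :: Q)) v : ℤ)
      = (∑ a ∈ M.toFinset,
          (chi (v.idxOf a < v.idxOf w) - chi (v.idxOf w < v.idxOf a)))
      + (∑ a ∈ M.toFinset, ∑ t ∈ Q.toFinset,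
          (chi (v.idxOf a < v.idxOf w ∧ v.idxOf a < v.idxOf t)
            - chi (v.idxOf w < v.idxOf a ∧ v.idxOf w < v.idxOf t)))
      + (∑ a ∈ M.toFinset, ∑ b ∈ M.toFinset,
          if M.idxOf a < M.idxOf b then
            (chi (v.idxOf a < v.idxOf w ∧ v.idxOf a < v.idxOf b)
              - chi (v.idxOf w < v.idxOf a ∧ v.idxOf w < v.idxOf b)) else 0) := by
  classical
  have hf := masterFacts hl
  have hσ := ranking_sigma hl
  set F : Finset α → ℤ := fun S =>
    chi (cond3 (P ++ w :: (M ++ Q)) v S) - chi (cond3 (P ++ (M ++ w :: Q)) v S) with hF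
  -- Step 1 : difference as a sum over all small subsets
  have step1 : (d3 (P ++ w :: (M ++ Q)) v : ℤ) - (d3 (P ++ (M ++ w :: Q)) v : ℤ)
      = ∑ S ∈ (Finset.univ : Finset α).powerset, F S := by
    rw [d3_sum, d3_sum, ← Finset.sum_sub_distrib]
  -- the difference set
  set D : Finset (Finset α) := (Finset.univ : Finset α).powerset.filter
    (fun S => S.card ≤ 3 ∧ w ∈ S ∧ (∀ p ∈ P, p ∉ S) ∧ ∃ a ∈ M, a ∈ S) with hD
  have vanish : ∀ S ∈ (Finset.univ : Finset α).powerset, S ∉ D → F S = 0 := by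
    intro S hS hSD
    have hnd : ¬ (S.card ≤ 3 ∧ w ∈ S ∧ (∀ p ∈ P, p ∉ S) ∧ ∃ a ∈ M, a ∈ S) :=
      fun h => hSD (Finset.mem_filter.mpr ⟨hS, h⟩)
    by_cases hc3 : S.card ≤ 3
    · have hshape : ¬ (w ∈ S ∧ (∀ p ∈ P, p ∉ S) ∧ ∃ a ∈ M, a ∈ S) :=
        fun h => hnd ⟨hc3, h⟩
      rw [hF]
      simp only
      rw [chi_congr (cond3_congr (mins_pi_iff_sigma hl hshape))]
      ring
    · rw [hF]
      simp only
      rw [chi_false (fun h => hc3 h.1), chi_false (fun h => hc3 h.1)]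
      ring
  have step2 : ∑ S ∈ (Finset.univ : Finset α).powerset, F S = ∑ S ∈ D, F S :=
    (Finset.sum_subset (Finset.filter_subset _ _) vanish).symm
  -- the three families
  set D1 : Finset (Finset α) := M.toFinset.image (fun a => ({w, a} : Finset α)) with hD1
  set D2 : Finset (Finset α) :=
    (M.toFinset ×ˢ Q.toFinset).image (fun p => ({w, p.1, p.2} : Finset α)) with hD2
  set D3 : Finset (Finset α) :=
    ((M.toFinset ×ˢ M.toFinset).filter
      (fun p => M.idxOf p.1 < M.idxOf p.2)).image
      (fun p => ({w, p.1, p.2} : Finset α)) with hD3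
  have hwM' : ∀ a ∈ M, a ≠ w := fun a ha h => hf.hwM (h ▸ ha)
  have hwQ' : ∀ t ∈ Q, t ≠ w := fun t ht h => hf.hwQ (h ▸ ht)
  -- D = D1 ∪ (D2 ∪ D3)
  have hcover : D = D1 ∪ (D2 ∪ D3) := by
    apply Finset.Subset.antisymm
    · intro S hS
      rw [hD, Finset.mem_filter] at hS
      obtain ⟨-, hcard, hwS, hnoP, a, haM, haS⟩ := hS
      have hTsub : ∀ c ∈ S.erase w, c ∈ M ∨ c ∈ Q := by
        intro c hc
        have hcS := Finset.mem_of_mem_erase hc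
        have hcw : c ≠ w := Finset.ne_of_mem_erase hc
        rcases classify hl c with h | h | h | h
        · exact absurd hcS (hnoP c h)
        · exact absurd h hcw
        · exact Or.inl h
        · exact Or.inr h
      have haT : a ∈ S.erase w := Finset.mem_erase.mpr ⟨hwM' a haM, haS⟩
      have hcT : (S.erase w).card ≤ 2 := by
        rw [Finset.card_erase_of_mem hwS]; omega
      have hcT1 : 1 ≤ (S.erase w).card := Finset.card_pos.mpr ⟨a, haT⟩
      have hSins : S = insert w (S.erase w) := (Finset.insert_erase hwS).symm
      interval_cases h : (S.erase w).card
      · obtain ⟨b, hb⟩ := Finset.card_eq_one.mp h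
        have hab : a = b := by rw [hb] at haT; exact Finset.mem_singleton.mp haT
        refine Finset.mem_union_left _ (Finset.mem_image.mpr ⟨a, ?_, ?_⟩)
        · exact List.mem_toFinset.mpr haM
        · rw [hSins, hb, hab]
      · obtain ⟨c, d, hcd, hT2⟩ := Finset.card_eq_two.mp h
        have hcMQ := hTsub c (by rw [hT2]; simp)
        have hdMQ := hTsub d (by rw [hT2]; simp)
        have haCD : a = c ∨ a = d := by
          rw [hT2] at haT
          simpa using haT
        have hSwcd : S = {w, c, d} := by rw [hSins, hT2]
        rcases hcMQ with hcM | hcQ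
        · rcases hdMQ with hdM | hdQ
          · -- both in M
            have hne : M.idxOf c ≠ M.idxOf d :=
              fun hh => hcd ((List.idxOf_inj hcM).1 hh)
            refine Finset.mem_union_right _ (Finset.mem_union_right _ ?_)
            rcases lt_or_gt_of_ne hne with hlt | hlt
            · exact Finset.mem_image.mpr ⟨(c, d), by
                simp [Finset.mem_filter, List.mem_toFinset, hcM, hdM, hlt], hSwcd.symm⟩
            · refine Finset.mem_image.mpr ⟨(d, c), by
                simp [Finset.mem_filter, List.mem_toFinset, hcM, hdM, hlt], ?_⟩
              rw [hSwcd, Finset.pair_comm c d]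
          · -- c ∈ M, d ∈ Q
            refine Finset.mem_union_right _ (Finset.mem_union_left _ ?_)
            exact Finset.mem_image.mpr ⟨(c, d), by
              simp [List.mem_toFinset, hcM, hdQ], hSwcd.symm⟩
        · rcases hdMQ with hdM | hdQ
          · -- c ∈ Q, d ∈ M
            refine Finset.mem_union_right _ (Finset.mem_union_left _ ?_)
            refine Finset.mem_image.mpr ⟨(d, c), by
              simp [List.mem_toFinset, hdM, hcQ], ?_⟩
            rw [hSwcd, Finset.pair_comm c d]
          · -- both in Q : contradiction with a ∈ M
            exfalso
            rcases haCD with rfl | rfl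
            · exact hf.hMQ a haM hcQ
            · exact hf.hMQ a haM hdQ
    · intro S hS
      rw [hD, Finset.mem_filter]
      refine ⟨Finset.mem_powerset.mpr (Finset.subset_univ _), ?_⟩
      rcases Finset.mem_union.mp hS with h | h
      · obtain ⟨a, haM, rfl⟩ := Finset.mem_image.mp h
        rw [List.mem_toFinset] at haM
        refine ⟨card_pair3 w a, by simp, ?_, a, haM, by simp⟩
        intro p hp hpS
        rcases Finset.mem_insert.mp hpS with h' | h'
        · exact hf.hwP (h' ▸ hp)
        · exact hf.hMP a haM (Finset.mem_singleton.mp h' ▸ hp)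
      · rcases Finset.mem_union.mp h with h' | h'
        · obtain ⟨⟨a, t⟩, hmem, rfl⟩ := Finset.mem_image.mp h'
          rw [Finset.mem_product, List.mem_toFinset, List.mem_toFinset] at hmem
          obtain ⟨haM, htQ⟩ := hmem
          refine ⟨card_triple3 w a t, by simp, ?_, a, haM, by simp⟩
          intro p hp hpS
          rcases Finset.mem_insert.mp hpS with h'' | h''
          · exact hf.hwP (h'' ▸ hp)
          · rcases Finset.mem_insert.mp h'' with h3 | h3
            · exact hf.hMP a haM (by rwa [h3] at hp)
            · exact hf.hQP t htQ (by rwa [Finset.mem_singleton.mp h3] at hp)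
        · obtain ⟨⟨a, b⟩, hmem, rfl⟩ := Finset.mem_image.mp h'
          rw [Finset.mem_filter, Finset.mem_product, List.mem_toFinset,
            List.mem_toFinset] at hmem
          obtain ⟨⟨haM, hbM⟩, -⟩ := hmem
          refine ⟨card_triple3 w a b, by simp, ?_, a, haM, by simp⟩
          intro p hp hpS
          rcases Finset.mem_insert.mp hpS with h'' | h''
          · exact hf.hwP (h'' ▸ hp)
          · rcases Finset.mem_insert.mp h'' with h3 | h3
            · exact hf.hMP a haM (by rwa [h3] at hp)
            · exact hf.hMP b hbM (by rwa [Finset.mem_singleton.mp h3] at hp)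
  -- disjointness
  have card2 : ∀ S ∈ D1, S.card = 2 := by
    intro S hS
    obtain ⟨a, haM, rfl⟩ := Finset.mem_image.mp hS
    rw [List.mem_toFinset] at haM
    exact Finset.card_pair (fun h => hf.hwM (h ▸ haM))
  have card3' : ∀ S ∈ D2 ∪ D3, S.card = 3 := by
    intro S hS
    have : ∃ a b : α, a ∈ M ∧ (b ∈ M ∨ b ∈ Q) ∧ a ≠ b ∧ S = {w, a, b} := by
      rcases Finset.mem_union.mp hS with h | h
      · obtain ⟨⟨a, t⟩, hmem, rfl⟩ := Finset.mem_image.mp h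
        rw [Finset.mem_product, List.mem_toFinset, List.mem_toFinset] at hmem
        exact ⟨a, t, hmem.1, Or.inr hmem.2, fun h' => hf.hMQ a hmem.1 (h' ▸ hmem.2), rfl⟩
      · obtain ⟨⟨a, b⟩, hmem, rfl⟩ := Finset.mem_image.mp h
        rw [Finset.mem_filter, Finset.mem_product, List.mem_toFinset,
          List.mem_toFinset] at hmem
        refine ⟨a, b, hmem.1.1, Or.inl hmem.1.2, ?_, rfl⟩
        intro h'
        subst h'
        exact absurd hmem.2 (lt_irrefl _)
    obtain ⟨a, b, haM, hbMQ, hab, rfl⟩ := this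
    have hwa : w ≠ a := fun h => hf.hwM (h ▸ haM)
    have hwb : w ≠ b := by
      rcases hbMQ with h | h
      · exact fun h' => hf.hwM (h' ▸ h)
      · exact fun h' => hf.hwQ (h' ▸ h)
    rw [Finset.card_insert_of_notMem (by simp [hwa, hwb]),
      Finset.card_insert_of_notMem (by simp [hab]), Finset.card_singleton]
  have hdisj1 : Disjoint D1 (D2 ∪ D3) := by
    rw [Finset.disjoint_left]
    intro S h1 h2
    have := card2 S h1
    have := card3' S h2
    omega
  have hdisj23 : Disjoint D2 D3 := by
    rw [Finset.disjoint_left]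
    intro S h2 h3
    obtain ⟨⟨a, t⟩, hmem, rfl⟩ := Finset.mem_image.mp h2
    rw [Finset.mem_product, List.mem_toFinset, List.mem_toFinset] at hmem
    obtain ⟨⟨a', b'⟩, hmem', heq⟩ := Finset.mem_image.mp h3
    rw [Finset.mem_filter, Finset.mem_product, List.mem_toFinset,
      List.mem_toFinset] at hmem'
    have ht : t ∈ ({w, a', b'} : Finset α) := by rw [heq]; simp
    rcases Finset.mem_insert.mp ht with h | h
    · exact hf.hwQ (h ▸ hmem.2)
    · rcases Finset.mem_insert.mp h with h' | h'
      · exact hf.hMQ a' hmem'.1.1 (h' ▸ hmem.2)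
      · exact hf.hMQ b' hmem'.1.2 (Finset.mem_singleton.mp h' ▸ hmem.2)
  -- compute the three sums
  have sum1 : ∑ S ∈ D1, F S = ∑ a ∈ M.toFinset,
      (chi (v.idxOf a < v.idxOf w) - chi (v.idxOf w < v.idxOf a)) := by
    rw [hD1, Finset.sum_image]
    · exact Finset.sum_congr rfl (fun a ha =>
        fval_pair hv hl (List.mem_toFinset.mp ha))
    · intro a ha b hb hab
      have : a ∈ ({w, b} : Finset α) := by rw [← show ({w, a} : Finset α) = {w, b} from hab]; simp
      rcases Finset.mem_insert.mp this with h | h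
      · exact absurd h (hwM' a (List.mem_toFinset.mp ha))
      · exact Finset.mem_singleton.mp h
  have sum2 : ∑ S ∈ D2, F S = ∑ a ∈ M.toFinset, ∑ t ∈ Q.toFinset,
      (chi (v.idxOf a < v.idxOf w ∧ v.idxOf a < v.idxOf t)
        - chi (v.idxOf w < v.idxOf a ∧ v.idxOf w < v.idxOf t)) := by
    rw [hD2, Finset.sum_image, Finset.sum_product]
    · refine Finset.sum_congr rfl (fun a ha => Finset.sum_congr rfl (fun t ht => ?_))
      rw [List.mem_toFinset] at ha ht
      exact fval3 hv hl (hwM' a ha) (hwQ' t ht)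
        (fun h => hf.hMQ a ha (by rw [show a = t from h]; exact ht))
        (mins_pi_tripleQ hf ha ht) (mins_sigma_tripleQ hf ha ht)
    · rintro ⟨a, t⟩ hat ⟨a', t'⟩ hat' heq
      dsimp only at heq
      simp only [Finset.mem_coe, Finset.mem_product, List.mem_toFinset] at hat hat'
      have ha : a ∈ ({w, a', t'} : Finset α) := by rw [← heq]; simp
      have ht : t ∈ ({w, a', t'} : Finset α) := by rw [← heq]; simp
      have ha' : a = a' := by
        rcases Finset.mem_insert.mp ha with h | h
        · exact absurd h (hwM' a hat.1)
        · rcases Finset.mem_insert.mp h with h' | h'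
          · exact h'
          · exact absurd (Finset.mem_singleton.mp h' ▸ hat.1) (fun hh => hf.hMQ a hat.1
              (Finset.mem_singleton.mp h' ▸ hat'.2))
      have ht' : t = t' := by
        rcases Finset.mem_insert.mp ht with h | h
        · exact absurd h (hwQ' t hat.2)
        · rcases Finset.mem_insert.mp h with h' | h'
          · exact absurd (h' ▸ hat.2) (hf.hMQ a' hat'.1)
          · exact Finset.mem_singleton.mp h'
      exact Prod.ext ha' ht'
  have sum3 : ∑ S ∈ D3, F S = ∑ a ∈ M.toFinset, ∑ b ∈ M.toFinset,
      if M.idxOf a < M.idxOf b then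
        (chi (v.idxOf a < v.idxOf w ∧ v.idxOf a < v.idxOf b)
          - chi (v.idxOf w < v.idxOf a ∧ v.idxOf w < v.idxOf b)) else 0 := by
    rw [hD3, Finset.sum_image]
    · rw [Finset.sum_filter, Finset.sum_product]
      refine Finset.sum_congr rfl (fun a ha => Finset.sum_congr rfl (fun b hb => ?_))
      rw [List.mem_toFinset] at ha hb
      split_ifs with hab
      · have hne : a ≠ b := fun h => by
          rw [h] at hab; exact absurd hab (lt_irrefl _)
        exact fval3 hv hl (hwM' a ha) (hwM' b hb) hne
          (mins_pi_tripleM hf ha hb) (mins_sigma_tripleM hf ha hb hab)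
      · rfl
    · rintro ⟨a, b⟩ hab ⟨a', b'⟩ hab' heq
      dsimp only at heq
      simp only [Finset.mem_coe, Finset.mem_filter, Finset.mem_product, List.mem_toFinset] at hab hab'
      obtain ⟨⟨haM, hbM⟩, hord⟩ := hab
      obtain ⟨⟨haM', hbM'⟩, hord'⟩ := hab'
      have ha : a ∈ ({w, a', b'} : Finset α) := by rw [← heq]; simp
      have hb : b ∈ ({w, a', b'} : Finset α) := by rw [← heq]; simp
      have hamem : a = a' ∨ a = b' := by
        rcases Finset.mem_insert.mp ha with h | h
        · exact absurd h (hwM' a haM)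
        · simpa using h
      have hbmem : b = a' ∨ b = b' := by
        rcases Finset.mem_insert.mp hb with h | h
        · exact absurd h (hwM' b hbM)
        · simpa using h
      rcases hamem with rfl | rfl
      · rcases hbmem with rfl | rfl
        · omega
        · rfl
      · rcases hbmem with rfl | rfl
        · omega
        · omega
  rw [step1, step2, hcover, Finset.sum_union hdisj1, Finset.sum_union hdisj23,
    sum1, sum2, sum3]
  ring

end Stmt11Aux
namespace Stmt11Aux

variable {α : Type} [DecidableEq α]

set_option linter.unusedSectionVars false
set_option maxHeartbeats 2000000

/-- per-vote indicator versions of `nn3`, `nn4`, `del`, `Qq`, `Pq`, `Rr`, `Ss` -/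
noncomputable def n3v (v : List α) (a b c : α) : ℤ :=
  chi (v.idxOf a < v.idxOf b ∧ v.idxOf b < v.idxOf c)

noncomputable def n4v (v : List α) (a b c d : α) : ℤ :=
  chi (v.idxOf a < v.idxOf b ∧ v.idxOf b < v.idxOf c ∧
    v.idxOf c < v.idxOf d)

noncomputable def dv (v : List α) (x y : α) : ℤ :=
  chi (v.idxOf x < v.idxOf y) - chi (v.idxOf y < v.idxOf x)

noncomputable def qv (v : List α) (x y t : α) : ℤ :=
  n3v v x y t + n3v v x t y - n3v v y x t - n3v v y t x

noncomputable def pv (v : List α) (x y z : α) : ℤ :=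
  3 * n3v v x z y + n3v v x y z + n3v v z x y + n3v v z y x
    - 4 * n3v v y z x - 2 * n3v v y x z

noncomputable def rv (v : List α) (y x z t : α) : ℤ :=
  2 * n4v v y z t x + 2 * n4v v y z x t + n4v v y t z x + n4v v y t x z

noncomputable def sv (v : List α) (y x z t : α) : ℤ :=
  rv v y x z t - rv v x y z t

/- abstract pointwise identities; `a b c d` play the roles of the `v`-indices
of `x y z t` respectively. -/

lemma idQ (a b d : ℕ) (hab : a ≠ b) (had : a ≠ d) (hbd : b ≠ d) :
    chi (a < b ∧ a < d) - chi (b < a ∧ b < d)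
      = chi (a < b ∧ b < d) + chi (a < d ∧ d < b)
        - chi (b < a ∧ a < d) - chi (b < d ∧ d < a) := by
  rcases hab.lt_or_gt with h1 | h1 <;>
  rcases had.lt_or_gt with h2 | h2 <;>
  rcases hbd.lt_or_gt with h3 | h3 <;>
  first
    | (exfalso; omega)
    | simp [chi, h1, h2, h3, h1.asymm, h2.asymm, h3.asymm]

lemma idP (a b c : ℕ) (hab : a ≠ b) (hac : a ≠ c) (hbc : b ≠ c) :
    (chi (c < b) - chi (b < c)) - (chi (c < a) - chi (a < c))
      + (chi (c < b ∧ c < a) - chi (b < c ∧ b < a))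
      - (chi (b < a ∧ b < c) - chi (a < b ∧ a < c))
    = 3 * chi (a < c ∧ c < b) + chi (a < b ∧ b < c) + chi (c < a ∧ a < b)
        + chi (c < b ∧ b < a) - 4 * chi (b < c ∧ c < a) - 2 * chi (b < a ∧ a < c) := by
  rcases hab.lt_or_gt with h1 | h1 <;>
  rcases hac.lt_or_gt with h2 | h2 <;>
  rcases hbc.lt_or_gt with h3 | h3 <;>
  first
    | (exfalso; omega)
    | simp [chi, h1, h2, h3, h1.asymm, h2.asymm, h3.asymm]

lemma idS (a b c d : ℕ) (hab : a ≠ b) (hac : a ≠ c) (had : a ≠ d)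
    (hbc : b ≠ c) (hbd : b ≠ d) (hcd : c ≠ d) :
    (chi (c < b ∧ c < d) - chi (b < c ∧ b < d))
      - (chi (c < a ∧ c < d) - chi (a < c ∧ a < d))
    = -((2 * chi (b < c ∧ c < d ∧ d < a) + 2 * chi (b < c ∧ c < a ∧ a < d)
          + chi (b < d ∧ d < c ∧ c < a) + chi (b < d ∧ d < a ∧ a < c))
        - (2 * chi (a < c ∧ c < d ∧ d < b) + 2 * chi (a < c ∧ c < b ∧ b < d)
          + chi (a < d ∧ d < c ∧ c < b) + chi (a < d ∧ d < b ∧ b < c))) := by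
  rcases hab.lt_or_gt with h1 | h1 <;>
  rcases hac.lt_or_gt with h2 | h2 <;>
  rcases had.lt_or_gt with h3 | h3 <;>
  rcases hbc.lt_or_gt with h4 | h4 <;>
  rcases hbd.lt_or_gt with h5 | h5 <;>
  rcases hcd.lt_or_gt with h6 | h6 <;>
  first
    | (exfalso; omega)
    | simp [chi, h1, h2, h3, h4, h5, h6,
        h1.asymm, h2.asymm, h3.asymm, h4.asymm, h5.asymm, h6.asymm]

/- the pointwise identities, phrased for a ranking `v` and distinct alternatives -/

lemma qv_eq {v : List α} (hv : IsRanking v) {x y t : α}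
    (hxy : x ≠ y) (hxt : x ≠ t) (hyt : y ≠ t) :
    chi (v.idxOf x < v.idxOf y ∧ v.idxOf x < v.idxOf t)
      - chi (v.idxOf y < v.idxOf x ∧ v.idxOf y < v.idxOf t)
    = qv v x y t := by
  unfold qv n3v
  exact idQ _ _ _ (idx_ne hv hxy) (idx_ne hv hxt) (idx_ne hv hyt)

lemma pv_eq {v : List α} (hv : IsRanking v) {x y z : α}
    (hxy : x ≠ y) (hxz : x ≠ z) (hyz : y ≠ z) :
    (chi (v.idxOf z < v.idxOf y) - chi (v.idxOf y < v.idxOf z))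
      - (chi (v.idxOf z < v.idxOf x) - chi (v.idxOf x < v.idxOf z))
      + (chi (v.idxOf z < v.idxOf y ∧ v.idxOf z < v.idxOf x)
          - chi (v.idxOf y < v.idxOf z ∧ v.idxOf y < v.idxOf x))
      - (chi (v.idxOf y < v.idxOf x ∧ v.idxOf y < v.idxOf z)
          - chi (v.idxOf x < v.idxOf y ∧ v.idxOf x < v.idxOf z))
    = pv v x y z := by
  unfold pv n3v
  exact idP _ _ _ (idx_ne hv hxy) (idx_ne hv hxz) (idx_ne hv hyz)

lemma sv_eq {v : List α} (hv : IsRanking v) {x y z t : α}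
    (hxy : x ≠ y) (hxz : x ≠ z) (hxt : x ≠ t) (hyz : y ≠ z) (hyt : y ≠ t)
    (hzt : z ≠ t) :
    (chi (v.idxOf z < v.idxOf y ∧ v.idxOf z < v.idxOf t)
        - chi (v.idxOf y < v.idxOf z ∧ v.idxOf y < v.idxOf t))
      - (chi (v.idxOf z < v.idxOf x ∧ v.idxOf z < v.idxOf t)
          - chi (v.idxOf x < v.idxOf z ∧ v.idxOf x < v.idxOf t))
    = - sv v y x z t := by
  unfold sv rv n4v
  exact idS _ _ _ _ (idx_ne hv hxy) (idx_ne hv hxz) (idx_ne hv hxt)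
    (idx_ne hv hyz) (idx_ne hv hyt) (idx_ne hv hzt)

end Stmt11Aux
namespace Stmt11Aux

variable {α : Type} [DecidableEq α]

set_option linter.unusedSectionVars false
set_option maxHeartbeats 2000000

lemma perVote [Fintype α] (v : List α) (hv : IsRanking v) (x y : α) (hxy : x ≠ y)
    (L Z R : List α) (hπ : IsRanking (L ++ y :: (Z ++ x :: R))) :
    ((d3 (L ++ y :: (Z ++ x :: R)) v : ℤ) - d3 (L ++ (Z ++ x :: y :: R)) v)
      + ((d3 (L ++ y :: (Z ++ x :: R)) v : ℤ) - d3 (L ++ x :: y :: (Z ++ R)) v)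
    = 2 * ∑ t ∈ R.toFinset, qv v x y t + 2 * dv v x y
      + ∑ z ∈ Z.toFinset, pv v x y z
      - ∑ z ∈ Z.toFinset, ∑ t ∈ (Z ++ R).toFinset,
          (if (L ++ y :: (Z ++ x :: R)).idxOf z < (L ++ y :: (Z ++ x :: R)).idxOf t
            then sv v y x z t else 0) := by
  classical
  -- list normalizations
  have e1 : (Z ++ [x]) ++ R = Z ++ x :: R := by simp
  have e2 : (Z ++ [x]) ++ y :: R = Z ++ x :: y :: R := by simp
  have hl1 : IsRanking (L ++ y :: ((Z ++ [x]) ++ R)) := by rw [e1]; exact hπ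
  have hf1 := masterFacts hl1
  -- basic distinctness facts
  have hxZ : x ∉ Z := by
    have h := hf1.hMnd
    rw [List.nodup_append] at h
    exact fun hx => h.2.2 x hx x (by simp) rfl
  have hZnd : Z.Nodup := by
    have h := hf1.hMnd
    rw [List.nodup_append] at h
    exact h.1
  have hyZ : y ∉ Z := fun h => hf1.hwM (List.mem_append_left _ h)
  have hyR : y ∉ R := hf1.hwQ
  have hxR : x ∉ R := fun h => hf1.hMQ x (by simp) h
  have hZR : ∀ z ∈ Z, z ∉ R := fun z hz => hf1.hMQ z (List.mem_append_left _ hz)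
  have hxZF : x ∉ Z.toFinset := fun h => hxZ (List.mem_toFinset.mp h)
  have hyZF : y ∉ Z.toFinset := fun h => hyZ (List.mem_toFinset.mp h)
  have hdisjZR : Disjoint Z.toFinset R.toFinset := by
    rw [Finset.disjoint_left]
    intro a ha ha'
    exact hZR a (List.mem_toFinset.mp ha) (List.mem_toFinset.mp ha')
  -- index evaluations in the sublists
  have eix : (Z ++ [x]).idxOf x = Z.length := by
    rw [List.idxOf_append_of_notMem hxZ]; simp
  have eiz : ∀ z ∈ Z, (Z ++ [x]).idxOf z = Z.idxOf z := fun z hz =>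
    List.idxOf_append_of_mem hz
  have eiy : (y :: Z).idxOf y = 0 := List.idxOf_cons_self
  have eiz' : ∀ z ∈ Z, (y :: Z).idxOf z = Z.idxOf z + 1 := by
    intro z hz
    rw [List.idxOf_cons_ne _ (fun h => hyZ (by rw [h]; exact hz))]
  -- index evaluations in the big ranking π
  have hidxZ : ∀ z ∈ Z, (L ++ y :: (Z ++ x :: R)).idxOf z
      = L.length + 1 + Z.idxOf z := by
    intro z hz
    have h := iπM hf1 (List.mem_append_left _ hz)
    rw [e1] at h
    rw [h, eiz z hz]
  have hidxR : ∀ t ∈ R, (L ++ y :: (Z ++ x :: R)).idxOf t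
      = L.length + 1 + Z.length + 1 + R.idxOf t := by
    intro t ht
    have h := iπQ hf1 ht
    rw [e1] at h
    rw [h, List.length_append]
    simp
    omega
  -- the two master identities
  have h1 := master hv hl1
  rw [e1, e2] at h1
  have p1 : (Z ++ x :: R).Perm (x :: (Z ++ R)) := List.perm_middle
  have p : (L ++ y :: (Z ++ x :: R)).Perm (L ++ x :: y :: (Z ++ R)) :=
    ((p1.cons y).trans (List.Perm.swap x y (Z ++ R))).append_left L
  have hl2 : IsRanking (L ++ x :: ((y :: Z) ++ R)) :=
    ⟨p.nodup_iff.mp hπ.1, fun a => p.mem_iff.mp (hπ.2 a)⟩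
  have h2 := master hv hl2
  simp only [List.cons_append] at h2
  -- rewrite the index sets
  have eM1 : (Z ++ [x]).toFinset = insert x Z.toFinset := by
    ext a; simp [or_comm]
  have eM2 : (y :: Z).toFinset = insert y Z.toFinset := by simp
  rw [eM1] at h1
  rw [eM2] at h2
  -- expand the h1 sums
  have h1S1 : (∑ a ∈ insert x Z.toFinset,
        (chi (v.idxOf a < v.idxOf y) - chi (v.idxOf y < v.idxOf a)))
      = dv v x y + ∑ a ∈ Z.toFinset,
        (chi (v.idxOf a < v.idxOf y) - chi (v.idxOf y < v.idxOf a)) := by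
    rw [Finset.sum_insert hxZF]; rfl
  have h1S2 : (∑ a ∈ insert x Z.toFinset, ∑ t ∈ R.toFinset,
        (chi (v.idxOf a < v.idxOf y ∧ v.idxOf a < v.idxOf t)
          - chi (v.idxOf y < v.idxOf a ∧ v.idxOf y < v.idxOf t)))
      = (∑ t ∈ R.toFinset,
          (chi (v.idxOf x < v.idxOf y ∧ v.idxOf x < v.idxOf t)
            - chi (v.idxOf y < v.idxOf x ∧ v.idxOf y < v.idxOf t)))
        + ∑ a ∈ Z.toFinset, ∑ t ∈ R.toFinset,
          (chi (v.idxOf a < v.idxOf y ∧ v.idxOf a < v.idxOf t)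
            - chi (v.idxOf y < v.idxOf a ∧ v.idxOf y < v.idxOf t)) :=
    Finset.sum_insert hxZF
  have h1S3 : (∑ a ∈ insert x Z.toFinset, ∑ b ∈ insert x Z.toFinset,
        if (Z ++ [x]).idxOf a < (Z ++ [x]).idxOf b then
          (chi (v.idxOf a < v.idxOf y ∧ v.idxOf a < v.idxOf b)
            - chi (v.idxOf y < v.idxOf a ∧ v.idxOf y < v.idxOf b)) else 0)
      = (∑ a ∈ Z.toFinset,
          (chi (v.idxOf a < v.idxOf y ∧ v.idxOf a < v.idxOf x)
            - chi (v.idxOf y < v.idxOf a ∧ v.idxOf y < v.idxOf x)))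
        + ∑ a ∈ Z.toFinset, ∑ b ∈ Z.toFinset,
          (if Z.idxOf a < Z.idxOf b then
            (chi (v.idxOf a < v.idxOf y ∧ v.idxOf a < v.idxOf b)
              - chi (v.idxOf y < v.idxOf a ∧ v.idxOf y < v.idxOf b)) else 0) := by
    rw [Finset.sum_insert hxZF]
    have hz0 : (∑ b ∈ insert x Z.toFinset,
        if (Z ++ [x]).idxOf x < (Z ++ [x]).idxOf b then
          (chi (v.idxOf x < v.idxOf y ∧ v.idxOf x < v.idxOf b)
            - chi (v.idxOf y < v.idxOf x ∧ v.idxOf y < v.idxOf b)) else 0) = 0 := by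
      rw [Finset.sum_insert hxZF, if_neg (lt_irrefl _)]
      rw [zero_add]
      apply Finset.sum_eq_zero
      intro b hb
      have hb' := List.mem_toFinset.mp hb
      rw [if_neg]
      rw [eix, eiz b hb']
      have := List.idxOf_lt_length_iff.2 hb'
      omega
    rw [hz0, zero_add, ← Finset.sum_add_distrib]
    refine Finset.sum_congr rfl fun a ha => ?_
    have ha' := List.mem_toFinset.mp ha
    rw [Finset.sum_insert hxZF]
    congr 1
    · rw [eix, eiz a ha', if_pos (List.idxOf_lt_length_iff.2 ha')]
    · refine Finset.sum_congr rfl fun b hb => ?_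
      have hb' := List.mem_toFinset.mp hb
      refine if_congr ?_ rfl rfl
      rw [eiz a ha', eiz b hb']
  -- expand the h2 sums
  have h2S1 : (∑ a ∈ insert y Z.toFinset,
        (chi (v.idxOf a < v.idxOf x) - chi (v.idxOf x < v.idxOf a)))
      = -dv v x y + ∑ a ∈ Z.toFinset,
        (chi (v.idxOf a < v.idxOf x) - chi (v.idxOf x < v.idxOf a)) := by
    rw [Finset.sum_insert hyZF]
    unfold dv
    ring
  have h2S2 : (∑ a ∈ insert y Z.toFinset, ∑ t ∈ R.toFinset,
        (chi (v.idxOf a < v.idxOf x ∧ v.idxOf a < v.idxOf t)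
          - chi (v.idxOf x < v.idxOf a ∧ v.idxOf x < v.idxOf t)))
      = (∑ t ∈ R.toFinset,
          (chi (v.idxOf y < v.idxOf x ∧ v.idxOf y < v.idxOf t)
            - chi (v.idxOf x < v.idxOf y ∧ v.idxOf x < v.idxOf t)))
        + ∑ a ∈ Z.toFinset, ∑ t ∈ R.toFinset,
          (chi (v.idxOf a < v.idxOf x ∧ v.idxOf a < v.idxOf t)
            - chi (v.idxOf x < v.idxOf a ∧ v.idxOf x < v.idxOf t)) :=
    Finset.sum_insert hyZF
  have h2S3 : (∑ a ∈ insert y Z.toFinset, ∑ b ∈ insert y Z.toFinset,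
        if (y :: Z).idxOf a < (y :: Z).idxOf b then
          (chi (v.idxOf a < v.idxOf x ∧ v.idxOf a < v.idxOf b)
            - chi (v.idxOf x < v.idxOf a ∧ v.idxOf x < v.idxOf b)) else 0)
      = (∑ b ∈ Z.toFinset,
          (chi (v.idxOf y < v.idxOf x ∧ v.idxOf y < v.idxOf b)
            - chi (v.idxOf x < v.idxOf y ∧ v.idxOf x < v.idxOf b)))
        + ∑ a ∈ Z.toFinset, ∑ b ∈ Z.toFinset,
          (if Z.idxOf a < Z.idxOf b then
            (chi (v.idxOf a < v.idxOf x ∧ v.idxOf a < v.idxOf b)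
              - chi (v.idxOf x < v.idxOf a ∧ v.idxOf x < v.idxOf b)) else 0) := by
    rw [Finset.sum_insert hyZF]
    have hy0 : (∑ b ∈ insert y Z.toFinset,
        if (y :: Z).idxOf y < (y :: Z).idxOf b then
          (chi (v.idxOf y < v.idxOf x ∧ v.idxOf y < v.idxOf b)
            - chi (v.idxOf x < v.idxOf y ∧ v.idxOf x < v.idxOf b)) else 0)
        = ∑ b ∈ Z.toFinset,
          (chi (v.idxOf y < v.idxOf x ∧ v.idxOf y < v.idxOf b)
            - chi (v.idxOf x < v.idxOf y ∧ v.idxOf x < v.idxOf b)) := by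
      rw [Finset.sum_insert hyZF, if_neg (lt_irrefl _), zero_add]
      refine Finset.sum_congr rfl fun b hb => ?_
      have hb' := List.mem_toFinset.mp hb
      rw [if_pos]
      rw [eiy, eiz' b hb']
      omega
    rw [hy0]
    congr 1
    refine Finset.sum_congr rfl fun a ha => ?_
    have ha' := List.mem_toFinset.mp ha
    rw [Finset.sum_insert hyZF]
    have : (if (y :: Z).idxOf a < (y :: Z).idxOf y then
        (chi (v.idxOf a < v.idxOf x ∧ v.idxOf a < v.idxOf y)
          - chi (v.idxOf x < v.idxOf a ∧ v.idxOf x < v.idxOf y)) else 0) = 0 := by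
      rw [if_neg]
      rw [eiy, eiz' a ha']
      omega
    rw [this, zero_add]
    refine Finset.sum_congr rfl fun b hb => ?_
    have hb' := List.mem_toFinset.mp hb
    refine if_congr ?_ rfl rfl
    rw [eiz' a ha', eiz' b hb']
    omega
  -- rewrite the goal's right-hand side groups
  have G1 : (∑ t ∈ R.toFinset, qv v x y t)
      = ∑ t ∈ R.toFinset,
          (chi (v.idxOf x < v.idxOf y ∧ v.idxOf x < v.idxOf t)
            - chi (v.idxOf y < v.idxOf x ∧ v.idxOf y < v.idxOf t)) := by
    refine Finset.sum_congr rfl fun t ht => ?_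
    have ht' := List.mem_toFinset.mp ht
    exact (qv_eq hv hxy (fun h => hxR (by rw [h]; exact ht'))
      (fun h => hyR (by rw [h]; exact ht'))).symm
  have G3 : (∑ z ∈ Z.toFinset, pv v x y z)
      = ((∑ a ∈ Z.toFinset,
            (chi (v.idxOf a < v.idxOf y) - chi (v.idxOf y < v.idxOf a)))
          - (∑ a ∈ Z.toFinset,
            (chi (v.idxOf a < v.idxOf x) - chi (v.idxOf x < v.idxOf a))))
        + ((∑ a ∈ Z.toFinset,
            (chi (v.idxOf a < v.idxOf y ∧ v.idxOf a < v.idxOf x)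
              - chi (v.idxOf y < v.idxOf a ∧ v.idxOf y < v.idxOf x)))
          - (∑ b ∈ Z.toFinset,
            (chi (v.idxOf y < v.idxOf x ∧ v.idxOf y < v.idxOf b)
              - chi (v.idxOf x < v.idxOf y ∧ v.idxOf x < v.idxOf b)))) := by
    rw [← Finset.sum_sub_distrib, ← Finset.sum_sub_distrib, ← Finset.sum_add_distrib]
    refine Finset.sum_congr rfl fun z hz => ?_
    have hz' := List.mem_toFinset.mp hz
    have := pv_eq hv hxy (fun h => hxZ (by rw [h]; exact hz'))
      (fun h => hyZ (by rw [h]; exact hz'))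
    linarith
  have G4 : (∑ z ∈ Z.toFinset, ∑ t ∈ (Z ++ R).toFinset,
        (if (L ++ y :: (Z ++ x :: R)).idxOf z < (L ++ y :: (Z ++ x :: R)).idxOf t
          then sv v y x z t else 0))
      = (∑ z ∈ Z.toFinset, ∑ t ∈ Z.toFinset,
          (if Z.idxOf z < Z.idxOf t then sv v y x z t else 0))
        + ∑ z ∈ Z.toFinset, ∑ t ∈ R.toFinset, sv v y x z t := by
    rw [← Finset.sum_add_distrib]
    refine Finset.sum_congr rfl fun z hz => ?_
    have hz' := List.mem_toFinset.mp hz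
    rw [show (Z ++ R).toFinset = Z.toFinset ∪ R.toFinset by simp,
      Finset.sum_union hdisjZR]
    congr 1
    · refine Finset.sum_congr rfl fun t ht => ?_
      have ht' := List.mem_toFinset.mp ht
      refine if_congr ?_ rfl rfl
      rw [hidxZ z hz', hidxZ t ht']
      omega
    · refine Finset.sum_congr rfl fun t ht => ?_
      have ht' := List.mem_toFinset.mp ht
      rw [if_pos]
      rw [hidxZ z hz', hidxR t ht']
      have := List.idxOf_lt_length_iff.2 hz'
      omega
  -- the three cancellation identities
  have hBy : (∑ t ∈ R.toFinset,
        (chi (v.idxOf x < v.idxOf y ∧ v.idxOf x < v.idxOf t)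
          - chi (v.idxOf y < v.idxOf x ∧ v.idxOf y < v.idxOf t)))
      + (∑ t ∈ R.toFinset,
        (chi (v.idxOf y < v.idxOf x ∧ v.idxOf y < v.idxOf t)
          - chi (v.idxOf x < v.idxOf y ∧ v.idxOf x < v.idxOf t))) = 0 := by
    rw [← Finset.sum_add_distrib]
    apply Finset.sum_eq_zero
    intro t ht
    ring
  have hBS : ((∑ a ∈ Z.toFinset, ∑ t ∈ R.toFinset,
        (chi (v.idxOf a < v.idxOf y ∧ v.idxOf a < v.idxOf t)
          - chi (v.idxOf y < v.idxOf a ∧ v.idxOf y < v.idxOf t)))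
      - (∑ a ∈ Z.toFinset, ∑ t ∈ R.toFinset,
        (chi (v.idxOf a < v.idxOf x ∧ v.idxOf a < v.idxOf t)
          - chi (v.idxOf x < v.idxOf a ∧ v.idxOf x < v.idxOf t))))
      + (∑ z ∈ Z.toFinset, ∑ t ∈ R.toFinset, sv v y x z t) = 0 := by
    rw [← Finset.sum_sub_distrib, ← Finset.sum_add_distrib]
    apply Finset.sum_eq_zero
    intro z hz
    have hz' := List.mem_toFinset.mp hz
    rw [← Finset.sum_sub_distrib, ← Finset.sum_add_distrib]
    apply Finset.sum_eq_zero
    intro t ht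
    have ht' := List.mem_toFinset.mp ht
    have hsv := sv_eq hv hxy (fun h => hxZ (by rw [h]; exact hz'))
      (fun h => hxR (by rw [h]; exact ht'))
      (fun h => hyZ (by rw [h]; exact hz'))
      (fun h => hyR (by rw [h]; exact ht'))
      (fun h => hZR z hz' (by rw [h]; exact ht'))
    linarith
  have hDS : ((∑ a ∈ Z.toFinset, ∑ b ∈ Z.toFinset,
        (if Z.idxOf a < Z.idxOf b then
          (chi (v.idxOf a < v.idxOf y ∧ v.idxOf a < v.idxOf b)
            - chi (v.idxOf y < v.idxOf a ∧ v.idxOf y < v.idxOf b)) else 0))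
      - (∑ a ∈ Z.toFinset, ∑ b ∈ Z.toFinset,
        (if Z.idxOf a < Z.idxOf b then
          (chi (v.idxOf a < v.idxOf x ∧ v.idxOf a < v.idxOf b)
            - chi (v.idxOf x < v.idxOf a ∧ v.idxOf x < v.idxOf b)) else 0)))
      + (∑ z ∈ Z.toFinset, ∑ t ∈ Z.toFinset,
          (if Z.idxOf z < Z.idxOf t then sv v y x z t else 0)) = 0 := by
    rw [← Finset.sum_sub_distrib, ← Finset.sum_add_distrib]
    apply Finset.sum_eq_zero
    intro z hz
    have hz' := List.mem_toFinset.mp hz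
    rw [← Finset.sum_sub_distrib, ← Finset.sum_add_distrib]
    apply Finset.sum_eq_zero
    intro t ht
    have ht' := List.mem_toFinset.mp ht
    split_ifs with hc
    · have hne : z ≠ t := by
        intro h
        rw [h] at hc
        exact absurd hc (lt_irrefl _)
      have hsv := sv_eq hv hxy (fun h => hxZ (by rw [h]; exact hz'))
        (fun h => hxZ (by rw [h]; exact ht'))
        (fun h => hyZ (by rw [h]; exact hz'))
        (fun h => hyZ (by rw [h]; exact ht')) hne
      linarith
    · ring
  rw [h1S1, h1S2, h1S3] at h1
  rw [h2S1, h2S2, h2S3] at h2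
  rw [G1, G3, G4]
  linarith [h1, h2, hBy, hBS, hDS]

end Stmt11Aux
namespace Stmt11Aux

variable {α : Type} [DecidableEq α]

set_option linter.unusedSectionVars false
set_option maxHeartbeats 2000000

lemma chi_cast (p : Prop) [Decidable p] :
    (((if p then 1 else 0) : ℕ) : ℤ) = chi p := by
  by_cases h : p <;> simp [chi, h]

lemma sum_map_cast {β : Type} (V : Multiset β) (f : β → ℕ) :
    (((V.map f).sum : ℕ) : ℤ) = (V.map fun v => (f v : ℤ)).sum := by
  induction V using Multiset.induction with
  | empty => simp
  | cons a s ih => simp [ih]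

lemma smA {β : Type} (V : Multiset β) (f g : β → ℤ) :
    (V.map fun v => f v + g v).sum = (V.map f).sum + (V.map g).sum := by
  induction V using Multiset.induction with
  | empty => simp
  | cons a s ih => simp [ih]; ring

lemma smS {β : Type} (V : Multiset β) (f g : β → ℤ) :
    (V.map fun v => f v - g v).sum = (V.map f).sum - (V.map g).sum := by
  induction V using Multiset.induction with
  | empty => simp
  | cons a s ih => simp [ih]; ring

lemma smC {β : Type} (V : Multiset β) (c : ℤ) (f : β → ℤ) :
    (V.map fun v => c * f v).sum = c * (V.map f).sum := by
  induction V using Multiset.induction with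
  | empty => simp
  | cons a s ih => simp [ih]; ring

lemma sum_comm' {β γ : Type} (s : Finset γ) (V : Multiset β) (f : γ → β → ℤ) :
    ∑ t ∈ s, (V.map (f t)).sum = (V.map fun v => ∑ t ∈ s, f t v).sum := by
  induction V using Multiset.induction with
  | empty => simp
  | cons a s' ih => simp [Finset.sum_add_distrib, ih]

lemma nn2_eq (V : Multiset (List α)) (x y : α) :
    ((nn2 V x y : ℕ) : ℤ) = (V.map fun v => chi (v.idxOf x < v.idxOf y)).sum := by
  unfold nn2
  induction V using Multiset.induction with
  | empty => simp
  | cons a s ih =>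
    rw [Multiset.countP_cons, Multiset.map_cons, Multiset.sum_cons, ← ih]
    push_cast
    rw [add_comm ((_ : ℤ))]
    congr 1
    exact (chi_eq_ite _).symm

lemma nn3_eq (V : Multiset (List α)) (x y z : α) :
    ((nn3 V x y z : ℕ) : ℤ) = (V.map fun v => n3v v x y z).sum := by
  unfold nn3 n3v
  induction V using Multiset.induction with
  | empty => simp
  | cons a s ih =>
    rw [Multiset.countP_cons, Multiset.map_cons, Multiset.sum_cons, ← ih]
    push_cast
    rw [add_comm ((_ : ℤ))]
    congr 1
    exact (chi_eq_ite _).symm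

lemma nn4_eq (V : Multiset (List α)) (x y z t : α) :
    ((nn4 V x y z t : ℕ) : ℤ) = (V.map fun v => n4v v x y z t).sum := by
  unfold nn4 n4v
  induction V using Multiset.induction with
  | empty => simp
  | cons a s ih =>
    rw [Multiset.countP_cons, Multiset.map_cons, Multiset.sum_cons, ← ih]
    push_cast
    rw [add_comm ((_ : ℤ))]
    congr 1
    exact (chi_eq_ite _).symm

lemma del_eq (V : Multiset (List α)) (x y : α) :
    del V x y = (V.map fun v => dv v x y).sum := by
  simp only [dv]
  rw [smS, ← nn2_eq, ← nn2_eq]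
  unfold del
  push_cast
  ring

lemma Qq_eq (V : Multiset (List α)) (x y t : α) :
    Qq V x y t = (V.map fun v => qv v x y t).sum := by
  simp only [qv]
  simp only [smS, smA]
  rw [← nn3_eq, ← nn3_eq, ← nn3_eq, ← nn3_eq]
  unfold Qq
  push_cast
  ring

lemma Pq_eq (V : Multiset (List α)) (x y z : α) :
    Pq V x y z = (V.map fun v => pv v x y z).sum := by
  simp only [pv]
  simp only [smS, smA, smC]
  rw [← nn3_eq, ← nn3_eq, ← nn3_eq, ← nn3_eq, ← nn3_eq, ← nn3_eq]
  unfold Pq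
  push_cast
  ring

lemma Ss_eq (V : Multiset (List α)) (y x z t : α) :
    Ss V y x z t = (V.map fun v => sv v y x z t).sum := by
  simp only [sv, rv]
  simp only [smS, smA, smC]
  rw [← nn4_eq, ← nn4_eq, ← nn4_eq, ← nn4_eq, ← nn4_eq, ← nn4_eq, ← nn4_eq, ← nn4_eq]
  unfold Ss Rr
  push_cast
  ring

end Stmt11Aux
open Stmt11Aux in
set_option maxHeartbeats 2000000 in
theorem stmt11 [Fintype α] [DecidableEq α]
    (V : Multiset (List α)) (hV : ∀ v ∈ V, IsRanking v)
    (x y : α) (hxy : x ≠ y)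
    (L Z R : List α)
    (hπ : IsRanking (L ++ y :: (Z ++ x :: R))) :
    ((d3V (L ++ y :: (Z ++ x :: R)) V : ℤ) - d3V (L ++ (Z ++ x :: y :: R)) V)
      + ((d3V (L ++ y :: (Z ++ x :: R)) V : ℤ) - d3V (L ++ x :: y :: (Z ++ R)) V)
    = 2 * ∑ t ∈ R.toFinset, Qq V x y t + 2 * del V x y
      + ∑ z ∈ Z.toFinset, Pq V x y z
      - ∑ z ∈ Z.toFinset, ∑ t ∈ (Z ++ R).toFinset,
          (if (L ++ y :: (Z ++ x :: R)).idxOf z < (L ++ y :: (Z ++ x :: R)).idxOf t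
            then Ss V y x z t else 0) := by
  classical
  have hd3V : ∀ l : List α, (d3V l V : ℤ) = (V.map fun v => (d3 l v : ℤ)).sum := by
    intro l
    unfold d3V
    exact sum_map_cast V _
  rw [hd3V, hd3V, hd3V]
  rw [← smS V (fun v => (d3 (L ++ y :: (Z ++ x :: R)) v : ℤ))
        (fun v => (d3 (L ++ (Z ++ x :: y :: R)) v : ℤ)),
      ← smS V (fun v => (d3 (L ++ y :: (Z ++ x :: R)) v : ℤ))
        (fun v => (d3 (L ++ x :: y :: (Z ++ R)) v : ℤ)),
      ← smA V]
  have hptwise : (V.map fun v =>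
        ((d3 (L ++ y :: (Z ++ x :: R)) v : ℤ) - d3 (L ++ (Z ++ x :: y :: R)) v)
          + ((d3 (L ++ y :: (Z ++ x :: R)) v : ℤ) - d3 (L ++ x :: y :: (Z ++ R)) v))
      = V.map fun v =>
        2 * ∑ t ∈ R.toFinset, qv v x y t + 2 * dv v x y
          + ∑ z ∈ Z.toFinset, pv v x y z
          - ∑ z ∈ Z.toFinset, ∑ t ∈ (Z ++ R).toFinset,
              (if (L ++ y :: (Z ++ x :: R)).idxOf z < (L ++ y :: (Z ++ x :: R)).idxOf t
                then sv v y x z t else 0) :=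
    Multiset.map_congr rfl (fun v hv => perVote v (hV v hv) x y hxy L Z R hπ)
  rw [hptwise]
  -- distribute the multiset sum over the right-hand side
  simp only [smS, smA, smC]
  rw [← sum_comm' R.toFinset V (fun t v => qv v x y t)]
  rw [← sum_comm' Z.toFinset V (fun z v => pv v x y z)]
  rw [← sum_comm' Z.toFinset V (fun z v => ∑ t ∈ (Z ++ R).toFinset,
        (if (L ++ y :: (Z ++ x :: R)).idxOf z < (L ++ y :: (Z ++ x :: R)).idxOf t
          then sv v y x z t else 0))]
  have hQ : ∑ t ∈ R.toFinset, (V.map fun v => qv v x y t).sum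
      = ∑ t ∈ R.toFinset, Qq V x y t :=
    Finset.sum_congr rfl fun t _ => (Qq_eq V x y t).symm
  have hP : ∑ z ∈ Z.toFinset, (V.map fun v => pv v x y z).sum
      = ∑ z ∈ Z.toFinset, Pq V x y z :=
    Finset.sum_congr rfl fun z _ => (Pq_eq V x y z).symm
  have hS : ∑ z ∈ Z.toFinset, (V.map fun v => ∑ t ∈ (Z ++ R).toFinset,
        (if (L ++ y :: (Z ++ x :: R)).idxOf z < (L ++ y :: (Z ++ x :: R)).idxOf t
          then sv v y x z t else 0)).sum
      = ∑ z ∈ Z.toFinset, ∑ t ∈ (Z ++ R).toFinset,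
          (if (L ++ y :: (Z ++ x :: R)).idxOf z < (L ++ y :: (Z ++ x :: R)).idxOf t
            then Ss V y x z t else 0) := by
    refine Finset.sum_congr rfl fun z _ => ?_
    rw [← sum_comm' ((Z ++ R).toFinset) V (fun t v =>
      (if (L ++ y :: (Z ++ x :: R)).idxOf z < (L ++ y :: (Z ++ x :: R)).idxOf t
        then sv v y x z t else 0))]
    refine Finset.sum_congr rfl fun t _ => ?_
    split_ifs with h
    · exact (Ss_eq V y x z t).symm
    · simp
  rw [hQ, hP, hS, ← del_eq]
end
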